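/- arXiv:2207.02629 — 3 statements merged into one kernel-verified Lean document; each statement's English description precedes it below -/
import Mathlib

section
/- The three binary phylogenetic trees T1 = ((1,2),(3,4)), T2 = ((1,3),(2,4)), T3 = ((1,4),(2,3)) on taxa {1,2,3,4} cannot all be displayed simultaneously in any binary tree-child network on {1,2,3,4}. -/
/-- A rooted, leaf-labeled digraph: a candidate phylogenetic network on taxon set `X`. -/
structure Net (V : Type) (X : Type) where
  E : V → V → Prop
  root : V
  leaf : X → V

namespace Net

variable {V X : Type}

/-- Indegree of a vertex. -/
noncomputable def inDeg (N : Net V X) (v : V) : ℕ := {u | N.E u v}.ncard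

/-- Outdegree of a vertex. -/
noncomputable def outDeg (N : Net V X) (v : V) : ℕ := {w | N.E v w}.ncard

def IsLeaf (N : Net V X) (v : V) : Prop := N.outDeg v = 0

/-- A tree node: indegree at most one. -/
def IsTreeNode (N : Net V X) (v : V) : Prop := N.inDeg v ≤ 1

/-- A reticulate node: indegree two (or more, in the non-binary case: indegree ≥ 2). -/
def IsRet (N : Net V X) (v : V) : Prop := 2 ≤ N.inDeg v

def Acyclic (N : Net V X) : Prop := ∀ v, ¬ Relation.TransGen N.E v v

/-- Common well-formedness conditions of a rooted phylogenetic network: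
acyclic, rooted, every node reachable from the root, leaves bijectively labeled by `X`. -/
structure IsPhylo (N : Net V X) : Prop where
  acyclic : N.Acyclic
  rootIn : N.inDeg N.root = 0
  reach : ∀ v, Relation.ReflTransGen N.E N.root v
  leafInj : Function.Injective N.leaf
  leafIsLeaf : ∀ x, N.IsLeaf (N.leaf x)
  leafSurj : ∀ v, N.IsLeaf v → ∃ x, N.leaf x = v
  leafIn : ∀ x, N.inDeg (N.leaf x) = 1

/-- A binary phylogenetic network: every non-leaf node is either a tree node
(indegree ≤ 1, outdegree 2) or a reticulate node (indegree 2, outdegree 1). -/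
structure IsBinaryNet (N : Net V X) extends IsPhylo N : Prop where
  deg : ∀ v, ¬ N.IsLeaf v →
    (N.inDeg v ≤ 1 ∧ N.outDeg v = 2) ∨ (N.inDeg v = 2 ∧ N.outDeg v = 1)

/-- Tree-child property: every non-leaf node has a child that is a tree node. -/
def TreeChild (N : Net V X) : Prop :=
  ∀ v, ¬ N.IsLeaf v → ∃ w, N.E v w ∧ N.IsTreeNode w

/-- A binary phylogenetic tree: a binary phylogenetic network without reticulate nodes. -/
def IsBinaryTree (N : Net V X) : Prop := N.IsBinaryNet ∧ ∀ v, N.inDeg v ≤ 1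

/-- A tree edge: an edge entering a tree node. -/
def TreeEdge (N : Net V X) (u v : V) : Prop := N.E u v ∧ N.IsTreeNode v

/-- The tree component rooted at `x`: all nodes reachable from `x` via tree edges. -/
def comp (N : Net V X) (x : V) : Set V := {v | Relation.ReflTransGen N.TreeEdge x v}

/-- `u` and `v` lie in a common tree component. -/
def InSameComp (N : Net V X) (u v : V) : Prop :=
  ∃ x, (x = N.root ∨ N.IsRet x) ∧ u ∈ N.comp x ∧ v ∈ N.comp x

/-- The taxa `x` and `y` form a cherry: their leaves share a common parent. -/
def HasCherry (N : Net V X) (x y : X) : Prop :=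
  x ≠ y ∧ ∃ p, N.E p (N.leaf x) ∧ N.E p (N.leaf y)

/-- The set of cherries of a tree, as unordered pairs of taxa. -/
def cherries (N : Net V X) : Set (Sym2 X) :=
  {p | ∃ x y, p = s(x, y) ∧ N.HasCherry x y}

/-- The tree has the 3-subtree `((a,b),c)`: a node whose two children are the leaf `c`
and the parent of the cherry `(a,b)`. -/
def Has3Subtree (N : Net V X) (a b c : X) : Prop :=
  a ≠ b ∧ a ≠ c ∧ b ≠ c ∧
  ∃ v p, N.E v p ∧ N.E v (N.leaf c) ∧ N.E p (N.leaf a) ∧ N.E p (N.leaf b)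

def IsAncestor (N : Net V X) (u v : V) : Prop := Relation.ReflTransGen N.E u v

/-- `l` is the least common ancestor of `u` and `v`. -/
def IsLCA (N : Net V X) (l u v : V) : Prop :=
  N.IsAncestor l u ∧ N.IsAncestor l v ∧
  ∀ w, N.IsAncestor w u → N.IsAncestor w v → N.IsAncestor w l

end Net

/-- Paths in `S` from `a` to `b` whose vertices other than `a` and `b` avoid the set `A`. -/
def pathAvoid {V : Type} (S : V → V → Prop) (A : Set V) (a b : V) : Prop :=
  Relation.ReflTransGen (fun u v => S u v ∧ (v = b ∨ v ∉ A)) a b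

/-- `T` is displayed in `N`: `N` contains a subdivision of `T` preserving the leaf labels,
i.e. `T` is obtained from `N` by deleting all but one incoming edge at each reticulate node,
pruning nodes without labeled leaf descendants, and suppressing degree-two nodes. -/
def Display {VT V X : Type} (T : Net VT X) (N : Net V X) : Prop :=
  ∃ (S : V → V → Prop) (φ : VT → V),
    (∀ u v, S u v → N.E u v) ∧
    Function.Injective φ ∧
    (∀ x, φ (T.leaf x) = N.leaf x) ∧
    (∀ a b, T.E a b → pathAvoid S (Set.range φ) (φ a) (φ b)) ∧
    (∀ a : VT, {w | S (φ a) w}.ncard = T.outDeg a ∧ {u | S u (φ a)}.ncard = T.inDeg a) ∧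
    (∀ v : V, v ∉ Set.range φ → ((∃ u, S u v) ∨ (∃ w, S v w)) →
      {w | S v w}.ncard = 1 ∧ {u | S u v}.ncard = 1)

/-- `N` displays the cherry `(x, y)`: some binary tree displayed in `N` has `(x,y)` as a cherry. -/
def DisplaysCherry {V X : Type} (N : Net V X) (x y : X) : Prop :=
  ∃ (VT : Type) (T : Net VT X),
    Finite VT ∧ T.IsBinaryTree ∧ Display T N ∧ T.HasCherry x y

/-- `N` displays the 3-subtree `((a,b),c)`. -/
def Displays3Subtree {V X : Type} (N : Net V X) (a b c : X) : Prop :=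
  ∃ (VT : Type) (T : Net VT X),
    Finite VT ∧ T.IsBinaryTree ∧ Display T N ∧ T.Has3Subtree a b c

/-- Isomorphism of leaf-labeled rooted digraphs. -/
def NetIso {V1 V2 X : Type} (N1 : Net V1 X) (N2 : Net V2 X) : Prop :=
  ∃ f : V1 ≃ V2, (∀ u v, N1.E u v ↔ N2.E (f u) (f v)) ∧
    f N1.root = N2.root ∧ ∀ x, f (N1.leaf x) = N2.leaf x


section TCaux
open Relation Set

variable {V VT X : Type}

lemma tc_unique [Finite V] {s : Set V} (h : s.ncard ≤ 1) {a b : V}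
    (ha : a ∈ s) (hb : b ∈ s) : a = b :=
  (Set.ncard_le_one s.toFinite).mp h a ha b hb

lemma tc_ncard_pos [Finite V] {s : Set V} (h : s.Nonempty) : s.ncard ≠ 0 :=
  Set.ncard_ne_zero_of_mem h.choose_spec s.toFinite

lemma tc_one_le [Finite V] {s : Set V} {a : V} (h : a ∈ s) : 1 ≤ s.ncard :=
  Nat.one_le_iff_ne_zero.mpr (tc_ncard_pos ⟨a, h⟩)

lemma tc_nonempty [Finite V] {s : Set V} (h : s.ncard = 1) : s.Nonempty := by
  obtain ⟨a, rfl⟩ := Set.ncard_eq_one.mp h; exact ⟨a, rfl⟩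

lemma tc_three_le [Finite V] {s : Set V} {a b c : V} (ha : a ∈ s) (hb : b ∈ s) (hc : c ∈ s)
    (hab : a ≠ b) (hac : a ≠ c) (hbc : b ≠ c) : 3 ≤ s.ncard := by
  have hsub : ({a,b,c} : Set V) ⊆ s := by simp [Set.insert_subset_iff, ha, hb, hc]
  calc 3 = ({a,b,c} : Set V).ncard := by
        rw [Set.ncard_insert_of_notMem (by simp [hab,hac]) (Set.toFinite _), Set.ncard_pair hbc]
    _ ≤ s.ncard := Set.ncard_le_ncard hsub s.toFinite

namespace Net

lemma leaf_no_out [Finite V] {N : Net V X} {v w : V} (h : N.IsLeaf v) : ¬ N.E v w := by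
  intro he
  exact tc_ncard_pos ⟨w, he⟩ h

lemma not_leaf_of_out [Finite V] {N : Net V X} {v w : V} (he : N.E v w) : ¬ N.IsLeaf v :=
  fun h => leaf_no_out h he

lemma in_unique [Finite V] {N : Net V X} {v u u' : V} (h : N.inDeg v ≤ 1)
    (h1 : N.E u v) (h2 : N.E u' v) : u = u' := tc_unique h h1 h2

lemma in_eq_singleton [Finite V] {N : Net V X} {v u : V} (h : N.inDeg v ≤ 1)
    (h1 : N.E u v) : {w | N.E w v} = {u} := by
  ext w
  simp only [Set.mem_setOf_eq, Set.mem_singleton_iff]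
  exact ⟨fun hw => in_unique h hw h1, fun hw => hw ▸ h1⟩

lemma wf_desc [Finite V] {N : Net V X} (hac : N.Acyclic) :
    WellFounded (fun u v : V => Relation.TransGen N.E v u) := by
  have h1 : IsTrans V (fun u v : V => Relation.TransGen N.E v u) :=
    ⟨fun a b c h1 h2 => Relation.TransGen.trans h2 h1⟩
  have h2 : IsIrrefl V (fun u v : V => Relation.TransGen N.E v u) := ⟨fun a h => hac a h⟩
  exact Finite.wellFounded_of_trans_of_irrefl _

end Net

/-- forced edge: `v`'s unique in-neighbour is `u`. -/
def Fc (N : Net V X) (u v : V) : Prop := N.E u v ∧ {w | N.E w v} = {u}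

lemma descent [Finite V] {N : Net V X} (hN : N.IsBinaryNet) (htc : N.TreeChild) (s : V) :
    ∃ a, N.IsLeaf a ∧ Relation.ReflTransGen (Fc N) s a := by
  refine (Net.wf_desc hN.toIsPhylo.acyclic).induction
    (C := fun s => ∃ a, N.IsLeaf a ∧ Relation.ReflTransGen (Fc N) s a) s ?_
  intro s IH
  by_cases hs : N.IsLeaf s
  · exact ⟨s, hs, .refl⟩
  · obtain ⟨w, hw, htn⟩ := htc s hs
    obtain ⟨a, ha, hrt⟩ := IH w (Relation.TransGen.single hw)
    exact ⟨a, ha, .head ⟨hw, Net.in_eq_singleton htn hw⟩ hrt⟩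

end TCaux
section TCaux2
set_option linter.unusedSectionVars false
open Relation Set

variable {V VT X : Type}

/-- Unpacked display data. -/
structure Disp (T : Net VT X) (N : Net V X) (S : V → V → Prop) (φ : VT → V) : Prop where
  sub : ∀ u v, S u v → N.E u v
  inj : Function.Injective φ
  leafMap : ∀ x, φ (T.leaf x) = N.leaf x
  path : ∀ a b, T.E a b → pathAvoid S (Set.range φ) (φ a) (φ b)
  degIm : ∀ a : VT, {w | S (φ a) w}.ncard = T.outDeg a ∧ {u | S u (φ a)}.ncard = T.inDeg a
  degSub : ∀ v : V, v ∉ Set.range φ → ((∃ u, S u v) ∨ (∃ w, S v w)) →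
      {w | S v w}.ncard = 1 ∧ {u | S u v}.ncard = 1

lemma display_disp {T : Net VT X} {N : Net V X} (h : Display T N) :
    ∃ (S : V → V → Prop) (φ : VT → V), Disp T N S φ := by
  obtain ⟨S, φ, h1, h2, h3, h4, h5, h6⟩ := h
  exact ⟨S, φ, ⟨h1, h2, h3, h4, h5, h6⟩⟩

lemma hasCherry_symm {M : Net VT X} {x y : X} (h : M.HasCherry x y) : M.HasCherry y x := by
  obtain ⟨hne, p, h1, h2⟩ := h
  exact ⟨hne.symm, p, h2, h1⟩

variable [Finite V] [Finite VT] {N : Net V X} {T : Net VT X} {S : V → V → Prop} {φ : VT → V}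

lemma T_out_dichotomy (hT : T.IsBinaryTree) (τ : VT) : T.outDeg τ = 0 ∨ T.outDeg τ = 2 := by
  by_cases h : T.IsLeaf τ
  · exact Or.inl h
  · rcases hT.1.deg τ h with ⟨_, h2⟩ | ⟨h2, _⟩
    · exact Or.inr h2
    · exact absurd (hT.2 τ) (by omega)

lemma T_leaf_parent (hT : T.IsBinaryTree) (x : X) : ∃ b, T.E b (T.leaf x) := by
  have h := hT.1.leafIn x
  exact tc_nonempty h

lemma T_parent_unique (hT : T.IsBinaryTree) {b b' v : VT} (h1 : T.E b v) (h2 : T.E b' v) :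
    b = b' := Net.in_unique (hT.2 v) h1 h2

lemma two_cherry (hT : T.IsBinaryTree) {x z w : X} (h1 : T.HasCherry x z)
    (h2 : T.HasCherry x w) : z = w := by
  obtain ⟨hxz, b, e1, e2⟩ := h1
  obtain ⟨hxw, b', e1', e2'⟩ := h2
  obtain rfl : b = b' := T_parent_unique hT e1 e1'
  by_contra hzw
  have hinj := hT.1.toIsPhylo.leafInj
  have h3 : 3 ≤ T.outDeg b :=
    tc_three_le e1 e2 e2' (fun h => hxz (hinj h)) (fun h => hxw (hinj h))
      (fun h => hzw (hinj h))
  rcases T_out_dichotomy hT b with h | h <;> omega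

lemma S_leaf_in (hN : N.IsBinaryNet) (hT : T.IsBinaryTree) (D : Disp T N S φ)
    (x : X) {P : V} (hP : N.E P (N.leaf x)) : S P (N.leaf x) := by
  have h := (D.degIm (T.leaf x)).2
  rw [D.leafMap, hT.1.toIsPhylo.leafIn x] at h
  obtain ⟨u, hu⟩ := tc_nonempty h
  have : u = P := Net.in_unique (le_of_eq (hN.toIsPhylo.leafIn x)) (D.sub _ _ hu) hP
  exact this ▸ hu

lemma S_leaf_in_unique (hT : T.IsBinaryTree) (D : Disp T N S φ)
    (x : X) {u u' : V} (h1 : S u (N.leaf x)) (h2 : S u' (N.leaf x)) : u = u' := by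
  have h := (D.degIm (T.leaf x)).2
  rw [D.leafMap, hT.1.toIsPhylo.leafIn x] at h
  exact tc_unique (le_of_eq h) h1 h2

lemma disp_lift (D : Disp T N S φ) {a b : VT} (h : Relation.ReflTransGen T.E a b) :
    Relation.ReflTransGen S (φ a) (φ b) := by
  induction h with
  | refl => exact .refl
  | tail _ e ih =>
    exact ih.trans (Relation.ReflTransGen.mono (fun u v (h : S u v ∧ _) => h.1) _ _ (D.path _ _ e))

lemma cherry_forcing (hN : N.IsBinaryNet) (hT : T.IsBinaryTree) (D : Disp T N S φ)
    {P : V} {x z : X} (hxz : x ≠ z) (hx : N.E P (N.leaf x)) (hz : N.E P (N.leaf z)) :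
    T.HasCherry x z := by
  have hSx := S_leaf_in hN hT D x hx
  have hSz := S_leaf_in hN hT D z hz
  have hPnl : ¬ N.IsLeaf P := Net.not_leaf_of_out hx
  have hPA : P ∈ Set.range φ := by
    by_contra hPA
    have h := (D.degSub P hPA (Or.inr ⟨_, hSx⟩)).1
    have : N.leaf x = N.leaf z := tc_unique (le_of_eq h) hSx hSz
    exact hxz (hN.toIsPhylo.leafInj this)
  have key : ∀ (xx : X) (b : VT), T.E b (T.leaf xx) → N.E P (N.leaf xx) → φ b = P := by
    intro xx b hb hPxx
    have hp : Relation.ReflTransGen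
        (fun u v => S u v ∧ (v = N.leaf xx ∨ v ∉ Set.range φ)) (φ b) (N.leaf xx) := by
      have := D.path b _ hb; rw [D.leafMap] at this; exact this
    rcases Relation.ReflTransGen.cases_tail hp with h | ⟨c, hc1, hc2⟩
    · exfalso
      have hb' : b = T.leaf xx := D.inj (by rw [D.leafMap]; exact h.symm)
      exact Net.leaf_no_out (hT.1.toIsPhylo.leafIsLeaf xx) (hb' ▸ hb)
    · have hcP : c = P := S_leaf_in_unique hT D xx hc2.1 (S_leaf_in hN hT D xx hPxx)
      subst hcP
      rcases Relation.ReflTransGen.cases_tail hc1 with h | ⟨c2, _, hc22⟩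
      · exact h.symm
      · rcases hc22.2 with h | h
        · exact absurd (h ▸ hN.toIsPhylo.leafIsLeaf xx) hPnl
        · exact absurd hPA h
  obtain ⟨bx, hbx⟩ := T_leaf_parent hT x
  obtain ⟨bz, hbz⟩ := T_leaf_parent hT z
  have e1 := key x bx hbx hx
  have e2 := key z bz hbz hz
  have : bx = bz := D.inj (e1.trans e2.symm)
  exact ⟨hxz, bx, hbx, this ▸ hbz⟩

end TCaux2
section TCaux3
set_option linter.unusedSectionVars false
open Relation Set

variable {V VT X : Type} [Finite V] [Finite VT] {N : Net V X} {T : Net VT X}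
  {S : V → V → Prop} {φ : VT → V}

lemma ret_not_range (hN : N.IsBinaryNet) (hT : T.IsBinaryTree) (D : Disp T N S φ)
    {r y : V} (houtR : {w | N.E r w} = {y}) : r ∉ Set.range φ := by
  have hEry : N.E r y := by rw [show N.E r y ↔ y ∈ {w | N.E r w} from Iff.rfl, houtR]; rfl
  rintro ⟨τ, hτ⟩
  have hsub : {w | S (φ τ) w} ⊆ {y} := by
    intro w hw
    have := D.sub _ _ hw
    rw [hτ] at this
    rw [← houtR]; exact this
  have hle : {w | S (φ τ) w}.ncard ≤ 1 := by
    have := Set.ncard_le_ncard hsub (Set.toFinite _)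
    simpa using this
  have hdeg := (D.degIm τ).1
  rcases T_out_dichotomy hT τ with h | h
  · obtain ⟨x, hx⟩ := hT.1.toIsPhylo.leafSurj τ h
    have : r = N.leaf x := by rw [← hτ, ← hx, D.leafMap]
    exact Net.not_leaf_of_out hEry (this ▸ hN.toIsPhylo.leafIsLeaf x)
  · omega

lemma disp_choice (hN : N.IsBinaryNet) (hT : T.IsBinaryTree) (D : Disp T N S φ)
    {r y p q : V} {t : X} (hy : N.leaf t = y)
    (houtR : {w | N.E r w} = {y}) (hinR : {w | N.E w r} = {p, q}) :
    S p r ∨ S q r := by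
  have hEry : N.E r y := by rw [show N.E r y ↔ y ∈ {w | N.E r w} from Iff.rfl, houtR]; rfl
  have hSry : S r y := by rw [← hy] at hEry ⊢; exact S_leaf_in hN hT D t hEry
  have hrA := ret_not_range hN hT D houtR
  have h := (D.degSub r hrA (Or.inr ⟨y, hSry⟩)).2
  obtain ⟨u, hu⟩ := tc_nonempty h
  have : u ∈ ({p, q} : Set V) := by rw [← hinR]; exact D.sub _ _ hu
  rcases this with h' | h'
  · exact Or.inl (h' ▸ hu)
  · exact Or.inr (h' ▸ hu)

lemma partner (hN : N.IsBinaryNet) (hT : T.IsBinaryTree) (D : Disp T N S φ)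
    {r y p q s a : V} {t ζ : X}
    (hy : N.leaf t = y)
    (hrs : r ≠ s)
    (hpq : p ≠ q)
    (hepr : N.E p r) (heqr : N.E q r)
    (houtR : {w | N.E r w} = {y})
    (houtP : {w | N.E p w} = {r, s})
    (hts : N.IsTreeNode s)
    (haLeaf : N.IsLeaf a)
    (hFsa : Relation.ReflTransGen (Fc N) s a)
    (hSpr : S p r)
    (hch : T.HasCherry t ζ) :
    N.leaf ζ = a := by
  have hac := hN.toIsPhylo.acyclic
  have hEry : N.E r y := by rw [show N.E r y ↔ y ∈ {w | N.E r w} from Iff.rfl, houtR]; rfl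
  have hEps : N.E p s := by
    rw [show N.E p s ↔ s ∈ {w | N.E p w} from Iff.rfl, houtP]; exact Or.inr rfl
  have hpnl : ¬ N.IsLeaf p := Net.not_leaf_of_out hepr
  have hrnl : ¬ N.IsLeaf r := Net.not_leaf_of_out hEry
  have hSry : S r y := by rw [← hy] at hEry ⊢; exact S_leaf_in hN hT D t hEry
  have hInY : ∀ u, N.E u y → u = r := by
    intro u hu
    exact Net.in_unique (le_of_eq (hy ▸ hN.toIsPhylo.leafIn t)) hu (by exact hEry)
  have hSinY : ∀ u, S u y → u = r := fun u hu => hInY u (D.sub _ _ hu)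
  have hrA : r ∉ Set.range φ := ret_not_range hN hT D houtR
  have hinR1 := (D.degSub r hrA (Or.inr ⟨y, hSry⟩)).2
  have hSinR : ∀ u, S u r → u = p := fun u hu => tc_unique (le_of_eq hinR1) hu hSpr
  -- chain from s never meets r or y
  have hchain_ne : ∀ c, Relation.ReflTransGen (Fc N) s c → c ≠ r ∧ c ≠ y := by
    intro c h
    induction h with
    | refl =>
      constructor
      · exact hrs.symm
      · intro h
        have : p = r := hInY p (h ▸ hEps)
        exact hac r (Relation.TransGen.single (this ▸ hepr))
    | tail h' e ih =>
      constructor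
      · intro h
        subst h
        have hp : p ∈ {w | N.E w _} := hepr
        have hq : q ∈ {w | N.E w _} := heqr
        rw [e.2] at hp hq
        exact hpq (hp.trans hq.symm)
      · intro h
        subst h
        have hr : r ∈ {w | N.E w _} := hEry
        rw [e.2] at hr
        exact ih.1 hr.symm
  -- image of T's root is not on the chain
  have hρy : Relation.ReflTransGen S (φ T.root) y := by
    have := disp_lift D (hT.1.toIsPhylo.reach (T.leaf t))
    rwa [D.leafMap, hy] at this
  have hρnot : ∀ c, Relation.ReflTransGen (Fc N) s c → φ T.root ≠ c := by
    intro c hsc hρc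
    have hpc : Relation.TransGen N.E p c :=
      Relation.TransGen.head' hEps (Relation.ReflTransGen.mono (fun u v (h : Fc N u v) => h.1) _ _ hsc)
    rw [hρc] at hρy
    rcases Relation.ReflTransGen.cases_tail hρy with h | ⟨d, hd1, hd2⟩
    · exact (hchain_ne c hsc).2 h.symm
    · have hdr : d = r := hSinY d hd2
      subst hdr
      rcases Relation.ReflTransGen.cases_tail hd1 with h | ⟨d2, hd21, hd22⟩
      · exact (hchain_ne c hsc).1 h.symm
      · have hd2p : d2 = p := hSinR d2 hd22
        by_cases hcp : c = p
        · exact hac p (hcp ▸ hpc)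
        · have hcp2 : Relation.TransGen S c p := by
            rcases Relation.ReflTransGen.cases_tail hd21 with h | ⟨d3, hd31, hd32⟩
            · exact absurd (h.symm.trans hd2p) hcp
            · exact hd2p ▸ Relation.TransGen.tail' hd31 hd32
          exact hac p (hpc.trans (Relation.TransGen.mono (fun u v (h : S u v) => D.sub u v h) _ _ hcp2))
  -- the forced chain from s is realized in S
  have hG1 : ∀ c, Relation.ReflTransGen (Fc N) c a →
      Relation.ReflTransGen (Fc N) s c → Relation.TransGen N.E p c →
      (Relation.ReflTransGen (fun u v => S u v ∧ Fc N u v) c a ∧ ∃ u, S u c) := by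
    intro c hca
    induction hca using Relation.ReflTransGen.head_induction_on with
    | refl =>
      intro _ _
      refine ⟨.refl, ?_⟩
      obtain ⟨α, hα⟩ := hN.toIsPhylo.leafSurj a haLeaf
      have h := (D.degIm (T.leaf α)).2
      rw [D.leafMap, hα, hT.1.toIsPhylo.leafIn α] at h
      exact tc_nonempty h
    | head e hda IH =>
      rename_i c d
      intro hsc hpc
      have hsd := hsc.tail e
      have hpd := hpc.tail e.1
      obtain ⟨hGda, u, hSud⟩ := IH hsd hpd
      have hucd : u = c := by
        have : u ∈ {w | N.E w d} := D.sub _ _ hSud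
        rw [e.2] at this
        exact this
      have hScd : S c d := hucd ▸ hSud
      refine ⟨hGda.head ⟨hScd, e⟩, ?_⟩
      by_cases hcA : c ∈ Set.range φ
      · obtain ⟨τ, hτ⟩ := hcA
        have hτroot : τ ≠ T.root := by
          rintro rfl
          exact hρnot c hsc hτ
        have hτin : ∃ σ, T.E σ τ := by
          rcases Relation.ReflTransGen.cases_tail (hT.1.toIsPhylo.reach τ) with h | ⟨σ, _, hσ⟩
          · exact absurd h hτroot
          · exact ⟨σ, hσ⟩
        obtain ⟨σ, hσ⟩ := hτin
        have hin1 : T.inDeg τ = 1 := le_antisymm (hT.2 τ) (tc_one_le hσ)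
        have h := (D.degIm τ).2
        rw [hτ, hin1] at h
        exact tc_nonempty h
      · exact tc_nonempty (D.degSub c hcA (Or.inr ⟨d, hScd⟩)).2
  obtain ⟨hGsa, u, hSus⟩ := hG1 s hFsa .refl (Relation.TransGen.single hEps)
  have hSps : S p s := by
    have : u = p := Net.in_unique hts (D.sub _ _ hSus) hEps
    exact this ▸ hSus
  have hpA : p ∈ Set.range φ := by
    by_contra hpA
    have h := (D.degSub p hpA (Or.inr ⟨r, hSpr⟩)).1
    exact hrs (tc_unique (le_of_eq h) hSpr hSps)
  -- the T-parent of leaf t maps to p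
  obtain ⟨b, hbt⟩ := T_leaf_parent hT t
  have hPy : Relation.ReflTransGen
      (fun u v => S u v ∧ (v = y ∨ v ∉ Set.range φ)) (φ b) y := by
    have := D.path b _ hbt
    rw [D.leafMap, hy] at this
    exact this
  have hφb : φ b = p := by
    rcases Relation.ReflTransGen.cases_tail hPy with h | ⟨c, hc1, hc2⟩
    · exfalso
      have hb' : b = T.leaf t := D.inj (by rw [D.leafMap, hy]; exact h.symm)
      exact Net.leaf_no_out (hT.1.toIsPhylo.leafIsLeaf t) (hb' ▸ hbt)
    · have hcr : c = r := hSinY c hc2.1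
      subst hcr
      rcases Relation.ReflTransGen.cases_tail hc1 with h | ⟨c2, hc21, hc22⟩
      · exact absurd (h ▸ hrA) (by simp)
      · have hc2p : c2 = p := hSinR c2 hc22.1
        subst hc2p
        rcases Relation.ReflTransGen.cases_tail hc21 with h | ⟨c3, _, hc32⟩
        · exact h.symm
        · rcases hc32.2 with h | h
          · exact absurd (h ▸ (hy ▸ hN.toIsPhylo.leafIsLeaf t)) hpnl
          · exact absurd hpA h
  -- the cherry partner's path
  obtain ⟨hne, P', e1, e2⟩ := hch
  have hP'b : P' = b := T_parent_unique hT e1 hbt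
  rw [hP'b] at e2
  have hPz : Relation.ReflTransGen
      (fun u v => S u v ∧ (v = N.leaf ζ ∨ v ∉ Set.range φ)) p (N.leaf ζ) := by
    have := D.path b _ e2
    rw [D.leafMap, hφb] at this
    exact this
  have hzl : N.IsLeaf (N.leaf ζ) := hN.toIsPhylo.leafIsLeaf ζ
  have hyz : y ≠ N.leaf ζ := by
    rw [← hy]
    exact fun h => hne (hN.toIsPhylo.leafInj h)
  -- follow the forced chain down
  have hFOL : ∀ c, Relation.ReflTransGen
      (fun u v => S u v ∧ (v = N.leaf ζ ∨ v ∉ Set.range φ)) c (N.leaf ζ) →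
      (c = N.leaf ζ ∨ c ∉ Set.range φ) →
      Relation.ReflTransGen (fun u v => S u v ∧ Fc N u v) c a → N.leaf ζ = a := by
    intro c h
    induction h using Relation.ReflTransGen.head_induction_on with
    | refl =>
      intro _ hG
      rcases Relation.ReflTransGen.cases_head hG with h' | ⟨d, hd, _⟩
      · exact h'
      · exact absurd (D.sub _ _ hd.1) (Net.leaf_no_out hzl)
    | head e h IH =>
      rename_i c w'
      intro hc hG
      rcases Relation.ReflTransGen.cases_head hG with h' | ⟨d, hd, hG'⟩
      · exact absurd (D.sub _ _ e.1) (Net.leaf_no_out (h' ▸ haLeaf))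
      · have hcnA : c ∉ Set.range φ := by
          rcases hc with h'' | h''
          · exact absurd (D.sub _ _ e.1) (Net.leaf_no_out (h'' ▸ hzl))
          · exact h''
        have hout1 := (D.degSub c hcnA (Or.inr ⟨_, e.1⟩)).1
        have hwd : w' = d := tc_unique (le_of_eq hout1) e.1 hd.1
        exact IH e.2 (hwd ▸ hG')
  -- first edge of the partner's path goes to s
  rcases Relation.ReflTransGen.cases_head hPz with h | ⟨w, hw1, hw2⟩
  · exact absurd (h ▸ hzl) hpnl
  · have hwmem : w ∈ ({r, s} : Set V) := by rw [← houtP]; exact D.sub _ _ hw1.1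
    rcases hwmem with h' | h'
    · exfalso
      rw [h'] at hw2
      rcases Relation.ReflTransGen.cases_head hw2 with h | ⟨w2, hw21, _⟩
      · exact hrnl (h ▸ hzl)
      · have hw2y : w2 = y := by
          have hm : w2 ∈ {w | N.E r w} := D.sub _ _ hw21.1
          rw [houtR] at hm
          exact hm
        rcases hw21.2 with h | h
        · exact hyz (h ▸ hw2y).symm
        · exact h ⟨T.leaf t, by rw [D.leafMap, hy, hw2y]⟩
    · have h'' : w = s := h'
      rw [h''] at hw2 hw1
      exact hFOL s hw2 hw1.2 hGsa

end TCaux3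
section TCaux4
set_option linter.unusedSectionVars false
open Relation Set

lemma two_same {V VA VB X' : Type} [Finite V] [Finite VA] [Finite VB]
    {N : Net V X'} {TA : Net VA X'} {TB : Net VB X'}
    {SA : V → V → Prop} {φA : VA → V} {SB : V → V → Prop} {φB : VB → V}
    (hN : N.IsBinaryNet) (hTA : TA.IsBinaryTree) (hTB : TB.IsBinaryTree)
    (DA : Disp TA N SA φA) (DB : Disp TB N SB φB)
    {r y p q s a : V} {t mA mB : X'}
    (hy : N.leaf t = y) (hrs : r ≠ s) (hpq : p ≠ q)
    (hepr : N.E p r) (heqr : N.E q r)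
    (houtR : {w | N.E r w} = {y}) (houtP : {w | N.E p w} = {r, s})
    (hts : N.IsTreeNode s) (haLeaf : N.IsLeaf a)
    (hFsa : Relation.ReflTransGen (Fc N) s a)
    (hA : SA p r) (hB : SB p r)
    (hchA : TA.HasCherry t mA) (hchB : TB.HasCherry t mB) (hAB : mA ≠ mB) : False := by
  have eA := partner hN hTA DA hy hrs hpq hepr heqr houtR houtP hts haLeaf hFsa hA hchA
  have eB := partner hN hTB DB hy hrs hpq hepr heqr houtR houtP hts haLeaf hFsa hB hchB
  exact hAB (hN.toIsPhylo.leafInj (eA.trans eB.symm))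

lemma partners {V1 V2 V3 : Type} {T1 : Net V1 (Fin 4)} {T2 : Net V2 (Fin 4)} {T3 : Net V3 (Fin 4)}
    (c1 : T1.HasCherry 0 1 ∧ T1.HasCherry 2 3)
    (c2 : T2.HasCherry 0 2 ∧ T2.HasCherry 1 3)
    (c3 : T3.HasCherry 0 3 ∧ T3.HasCherry 1 2) (t : Fin 4) :
    ∃ m1 m2 m3 : Fin 4, T1.HasCherry t m1 ∧ T2.HasCherry t m2 ∧ T3.HasCherry t m3 ∧
      m1 ≠ m2 ∧ m1 ≠ m3 ∧ m2 ≠ m3 := by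
  fin_cases t
  · exact ⟨1, 2, 3, c1.1, c2.1, c3.1, by decide, by decide, by decide⟩
  · exact ⟨0, 3, 2, hasCherry_symm c1.1, c2.2, c3.2, by decide, by decide, by decide⟩
  · exact ⟨3, 0, 1, c1.2, hasCherry_symm c2.1, hasCherry_symm c3.2, by decide, by decide, by decide⟩
  · exact ⟨2, 1, 0, hasCherry_symm c1.2, hasCherry_symm c2.2, hasCherry_symm c3.1, by decide,
      by decide, by decide⟩

end TCaux4
/-- The three binary trees `((1,2),(3,4))`, `((1,3),(2,4))`, `((1,4),(2,3))` on four taxa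
(each determined by its two disjoint cherries) cannot be displayed simultaneously in any
binary tree-child network on those taxa. -/
theorem stmt_14 (V1 V2 V3 : Type) (T1 : Net V1 (Fin 4)) (T2 : Net V2 (Fin 4))
    (T3 : Net V3 (Fin 4))
    (f1 : Finite V1) (f2 : Finite V2) (f3 : Finite V3)
    (h1 : T1.IsBinaryTree) (h2 : T2.IsBinaryTree) (h3 : T3.IsBinaryTree)
    (c1 : T1.HasCherry 0 1 ∧ T1.HasCherry 2 3)
    (c2 : T2.HasCherry 0 2 ∧ T2.HasCherry 1 3)
    (c3 : T3.HasCherry 0 3 ∧ T3.HasCherry 1 2) :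
    ∀ (V : Type) (N : Net V (Fin 4)), Finite V → N.IsBinaryNet → N.TreeChild →
      ¬ (Display T1 N ∧ Display T2 N ∧ Display T3 N) := by
  haveI := f1; haveI := f2; haveI := f3
  rintro V N finV hbn htc ⟨d1, d2, d3⟩
  haveI := finV
  obtain ⟨S1, φ1, D1⟩ := display_disp d1
  obtain ⟨S2, φ2, D2⟩ := display_disp d2
  obtain ⟨S3, φ3, D3⟩ := display_disp d3
  have hphy := hbn.toIsPhylo
  -- the root is not a leaf
  have hrootnl : ¬ N.IsLeaf N.root := by
    intro h
    have key : ∀ x : Fin 4, N.leaf x = N.root := by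
      intro x
      rcases Relation.ReflTransGen.cases_head (hphy.reach (N.leaf x)) with h' | ⟨w, hw, _⟩
      · exact h'.symm
      · exact absurd hw (Net.leaf_no_out h)
    exact (by decide : (0 : Fin 4) ≠ 1) (hphy.leafInj ((key 0).trans (key 1).symm))
  -- a minimal non-leaf vertex
  obtain ⟨m, hm, hmin⟩ := (Net.wf_desc hphy.acyclic).has_min {v | ¬ N.IsLeaf v} ⟨N.root, hrootnl⟩
  have hleafchild : ∀ w, N.E m w → N.IsLeaf w := by
    intro w hw
    by_contra hc
    exact hmin w hc (Relation.TransGen.single hw)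
  rcases hbn.deg m hm with ⟨hin, hout⟩ | ⟨hin, hout⟩
  · -- m is a tree node with two leaf children: a cherry in N
    obtain ⟨x, z, hxz, hset⟩ := Set.ncard_eq_two.mp hout
    have hEmx : N.E m x := by
      rw [show N.E m x ↔ x ∈ {w | N.E m w} from Iff.rfl, hset]; exact Or.inl rfl
    have hEmz : N.E m z := by
      rw [show N.E m z ↔ z ∈ {w | N.E m w} from Iff.rfl, hset]; exact Or.inr rfl
    obtain ⟨u, hu⟩ := hphy.leafSurj x (hleafchild x hEmx)
    obtain ⟨w, hw⟩ := hphy.leafSurj z (hleafchild z hEmz)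
    have huw : u ≠ w := by
      intro h
      exact hxz (hu ▸ hw ▸ h ▸ rfl)
    have ch1 : T1.HasCherry u w :=
      cherry_forcing hbn h1 D1 huw (hu.symm ▸ hEmx) (hw.symm ▸ hEmz)
    have ch2 : T2.HasCherry u w :=
      cherry_forcing hbn h2 D2 huw (hu.symm ▸ hEmx) (hw.symm ▸ hEmz)
    obtain ⟨m1, m2, m3, hm1, hm2, hm3, h12, _, _⟩ := partners c1 c2 c3 u
    exact h12 ((two_cherry h1 ch1 hm1).symm.trans (two_cherry h2 ch2 hm2))
  · -- m is a reticulation with a leaf child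
    obtain ⟨y, houtR⟩ := Set.ncard_eq_one.mp hout
    have hEry : N.E m y := by
      rw [show N.E m y ↔ y ∈ {w | N.E m w} from Iff.rfl, houtR]; rfl
    obtain ⟨t, hy⟩ := hphy.leafSurj y (hleafchild y hEry)
    obtain ⟨p, q, hpq, hinR⟩ := Set.ncard_eq_two.mp hin
    have hepr : N.E p m := by
      rw [show N.E p m ↔ p ∈ {w | N.E w m} from Iff.rfl, hinR]; exact Or.inl rfl
    have heqr : N.E q m := by
      rw [show N.E q m ↔ q ∈ {w | N.E w m} from Iff.rfl, hinR]; exact Or.inr rfl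
    have hrnt : ¬ N.IsTreeNode m := by
      rw [Net.IsTreeNode, hin]; omega
    have hstr : ∀ p', N.E p' m → ∃ s', m ≠ s' ∧ {w | N.E p' w} = {m, s'} ∧ N.IsTreeNode s' := by
      intro p' hp'
      have hnl : ¬ N.IsLeaf p' := Net.not_leaf_of_out hp'
      obtain ⟨wt, hwt, htn⟩ := htc p' hnl
      rcases hbn.deg p' hnl with ⟨_, ho⟩ | ⟨_, ho⟩
      · obtain ⟨x, z, hxz, hset⟩ := Set.ncard_eq_two.mp ho
        have hm' : m ∈ ({x, z} : Set V) := by rw [← hset]; exact hp'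
        have hwt' : wt ∈ ({x, z} : Set V) := by rw [← hset]; exact hwt
        rcases hm' with h | h
        · refine ⟨z, h ▸ hxz, by rw [hset, h], ?_⟩
          rcases hwt' with h2 | h2
          · exact absurd ((h2.trans h.symm) ▸ htn) hrnt
          · exact h2 ▸ htn
        · have h' : m = z := h
          refine ⟨x, fun hh => hxz (hh ▸ h'), by rw [hset, h', Set.pair_comm], ?_⟩
          rcases hwt' with h2 | h2
          · exact h2 ▸ htn
          · exact absurd ((Set.mem_singleton_iff.mp h2).trans h'.symm ▸ htn) hrnt
      · obtain ⟨c, hc⟩ := Set.ncard_eq_one.mp ho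
        have hmc : m = c := by
          have : m ∈ {w | N.E p' w} := hp'
          rw [hc] at this; exact this
        have hwc : wt = c := by
          have : wt ∈ {w | N.E p' w} := hwt
          rw [hc] at this; exact this
        exact absurd ((hwc.trans hmc.symm) ▸ htn) hrnt
    obtain ⟨sp, hrsp, houtP, htsp⟩ := hstr p hepr
    obtain ⟨sq, hrsq, houtQ, htsq⟩ := hstr q heqr
    obtain ⟨ap, hapL, hFp⟩ := descent hbn htc sp
    obtain ⟨aq, haqL, hFq⟩ := descent hbn htc sq
    obtain ⟨m1, m2, m3, hch1, hch2, hch3, h12, h13, h23⟩ := partners c1 c2 c3 t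
    have hc1 := disp_choice hbn h1 D1 hy houtR hinR
    have hc2 := disp_choice hbn h2 D2 hy houtR hinR
    have hc3 := disp_choice hbn h3 D3 hy houtR hinR
    rcases hc1 with h1c | h1c <;> rcases hc2 with h2c | h2c <;> rcases hc3 with h3c | h3c
    · exact two_same hbn h1 h2 D1 D2 hy hrsp hpq hepr heqr houtR houtP htsp hapL hFp
        h1c h2c hch1 hch2 h12
    · exact two_same hbn h1 h2 D1 D2 hy hrsp hpq hepr heqr houtR houtP htsp hapL hFp
        h1c h2c hch1 hch2 h12
    · exact two_same hbn h1 h3 D1 D3 hy hrsp hpq hepr heqr houtR houtP htsp hapL hFp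
        h1c h3c hch1 hch3 h13
    · exact two_same hbn h2 h3 D2 D3 hy hrsq hpq.symm heqr hepr houtR houtQ htsq haqL hFq
        h2c h3c hch2 hch3 h23
    · exact two_same hbn h2 h3 D2 D3 hy hrsp hpq hepr heqr houtR houtP htsp hapL hFp
        h2c h3c hch2 hch3 h23
    · exact two_same hbn h1 h3 D1 D3 hy hrsq hpq.symm heqr hepr houtR houtQ htsq haqL hFq
        h1c h3c hch1 hch3 h13
    · exact two_same hbn h1 h2 D1 D2 hy hrsq hpq.symm heqr hepr houtR houtQ htsq haqL hFq
        h1c h2c hch1 hch2 h12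
    · exact two_same hbn h1 h2 D1 D2 hy hrsq hpq.symm heqr hepr houtR houtQ htsq haqL hFq
        h1c h2c hch1 hch2 h12
end

section
/- Every binary tree-child phylogenetic network N on an n-taxon set X is displayed in some binary tree-child network N' on X that has exactly n−1 reticulate nodes and all of whose tree components are paths each containing exactly one leaf; moreover N' can be obtained from N by only adding reticulate edges (and subdividing edges). -/
open Set Relation
set_option linter.unusedSectionVars false

namespace Net

variable {V X : Type} [Fintype V]

/-- Topological rank: number of strict ancestors. -/
noncomputable def rk (N : Net V X) (v : V) : ℕ := {u | Relation.TransGen N.E u v}.ncard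

lemma rk_lt (N : Net V X) (hac : N.Acyclic) {v w : V} (h : N.E v w) : N.rk v < N.rk w := by
  apply Set.ncard_lt_ncard _ (Set.toFinite _)
  constructor
  · intro u hu; exact hu.tail h
  · intro hsub
    exact hac v (hsub (Relation.TransGen.single h))

lemma rk_le_card (N : Net V X) (v : V) : N.rk v ≤ Fintype.card V := by
  have := Set.ncard_le_ncard (Set.subset_univ {u | Relation.TransGen N.E u v}) (Set.toFinite _)
  simpa [rk, Set.ncard_univ, Nat.card_eq_fintype_card] using this

lemma acyclic_ne (N : Net V X) (hac : N.Acyclic) {v w : V} (h : N.E v w) : v ≠ w := by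
  rintro rfl; exact hac v (Relation.TransGen.single h)

lemma not_leaf_of_edge (N : Net V X) {v w : V} (h : N.E v w) : ¬ N.IsLeaf v := by
  intro hl
  have : {w | N.E v w} = ∅ := by
    rw [← Set.ncard_eq_zero (Set.toFinite _)]; exact hl
  exact absurd h (by simp [Set.eq_empty_iff_forall_notMem] at this; exact this w)

lemma leaf_no_edge (N : Net V X) {v w : V} (hl : N.IsLeaf v) : ¬ N.E v w :=
  fun h => N.not_leaf_of_edge h hl

lemma exists_pred (N : Net V X) (hp : N.IsPhylo) {v : V} (hv : v ≠ N.root) :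
    ∃ u, N.E u v := by
  rcases (hp.reach v).cases_tail with h | ⟨c, _, hc⟩
  · exact absurd h hv
  · exact ⟨c, hc⟩

lemma root_no_pred (N : Net V X) (hp : N.IsPhylo) {u : V} : ¬ N.E u N.root := by
  intro h
  have : {u | N.E u N.root} = ∅ := by
    rw [← Set.ncard_eq_zero (Set.toFinite _)]; exact hp.rootIn
  exact absurd h (by simp [Set.eq_empty_iff_forall_notMem] at this; exact this u)

lemma pred_unique (N : Net V X) {v u u' : V} (htn : N.IsTreeNode v)
    (h1 : N.E u v) (h2 : N.E u' v) : u = u' := by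
  by_contra hne
  have hsub : ({u, u'} : Set V) ⊆ {a | N.E a v} := by
    rintro a (rfl | rfl) <;> assumption
  have := Set.ncard_le_ncard hsub (Set.toFinite _)
  rw [Set.ncard_pair hne] at this
  exact absurd (le_trans this htn) (by norm_num)

lemma treeNode_of_not_ret (N : Net V X) {v : V} (h : ¬ N.IsRet v) : N.IsTreeNode v := by
  unfold IsRet at h; unfold IsTreeNode; omega

/-- A "component root": the root or a reticulate node. -/
def CompRoot (N : Net V X) (x : V) : Prop := x = N.root ∨ N.IsRet x

lemma compRoot_no_treeEdge (N : Net V X) (hp : N.IsPhylo) {x w : V}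
    (hx : N.CompRoot x) (h : N.TreeEdge w x) : False := by
  rcases hx with rfl | hret
  · exact N.root_no_pred hp h.1
  · have := h.2; unfold IsTreeNode at this; unfold IsRet at hret; omega

lemma exists_compRoot (N : Net V X) (hp : N.IsPhylo) (v : V) :
    ∃ x, N.CompRoot x ∧ v ∈ N.comp x := by
  suffices h : ∀ n v, N.rk v ≤ n → ∃ x, N.CompRoot x ∧ v ∈ N.comp x from
    h (N.rk v) v le_rfl
  intro n
  induction n with
  | zero =>
    intro v hv
    by_cases hroot : v = N.root
    · exact ⟨N.root, Or.inl rfl, by rw [hroot]; exact Relation.ReflTransGen.refl⟩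
    · obtain ⟨u, hu⟩ := N.exists_pred hp hroot
      have : N.rk v ≠ 0 := by
        intro h0
        have : {u | Relation.TransGen N.E u v} = ∅ := by
          rw [← Set.ncard_eq_zero (Set.toFinite _)]; exact h0
        exact absurd (Relation.TransGen.single hu)
          (by simp [Set.eq_empty_iff_forall_notMem] at this; exact this u)
      omega
  | succ n ih =>
    intro v hv
    by_cases hroot : v = N.root
    · exact ⟨N.root, Or.inl rfl, by rw [hroot]; exact Relation.ReflTransGen.refl⟩
    by_cases hret : N.IsRet v
    · exact ⟨v, Or.inr hret, Relation.ReflTransGen.refl⟩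
    obtain ⟨u, hu⟩ := N.exists_pred hp hroot
    have hlt : N.rk u < N.rk v := N.rk_lt hp.acyclic hu
    obtain ⟨x, hx, hux⟩ := ih u (by omega)
    exact ⟨x, hx, hux.tail ⟨hu, N.treeNode_of_not_ret hret⟩⟩

lemma compRoot_unique (N : Net V X) (hp : N.IsPhylo) {x y v : V}
    (hx : N.CompRoot x) (hy : N.CompRoot y)
    (hvx : v ∈ N.comp x) (hvy : v ∈ N.comp y) : x = y := by
  suffices h : ∀ n v, N.rk v ≤ n → v ∈ N.comp x → v ∈ N.comp y → x = y from
    h (N.rk v) v le_rfl hvx hvy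
  intro n
  induction n with
  | zero =>
    intro v _ h1 h2
    rcases h1.cases_tail with rfl | ⟨w, _, hw⟩
    · rcases h2.cases_tail with rfl | ⟨w, _, hw⟩
      · rfl
      · exact absurd (N.compRoot_no_treeEdge hp hx hw) not_false
    · have := N.rk_lt hp.acyclic hw.1
      omega
  | succ n ih =>
    intro v hv h1 h2
    rcases h1.cases_tail with rfl | ⟨w1, hw1', hw1⟩
    · rcases h2.cases_tail with rfl | ⟨w, _, hw⟩
      · rfl
      · exact absurd (N.compRoot_no_treeEdge hp hx hw) not_false
    rcases h2.cases_tail with rfl | ⟨w2, hw2', hw2⟩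
    · exact absurd (N.compRoot_no_treeEdge hp hy hw1) not_false
    have heq : w1 = w2 := N.pred_unique hw1.2 hw1.1 hw2.1
    have hlt : N.rk w1 < N.rk v := N.rk_lt hp.acyclic hw1.1
    exact ih w1 (by omega) hw1' (heq ▸ hw2')

lemma rk_lt_card (N : Net V X) (hac : N.Acyclic) (v : V) : N.rk v < Fintype.card V := by
  have hsub : {u | Relation.TransGen N.E u v} ⊆ Set.univ \ {v} := by
    intro u hu
    refine ⟨Set.mem_univ u, ?_⟩
    intro h
    rw [Set.mem_singleton_iff] at h
    subst h
    exact hac u hu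
  have h1 := Set.ncard_le_ncard hsub (Set.toFinite _)
  have h2 : (Set.univ \ {v} : Set V).ncard = Fintype.card V - 1 := by
    rw [Set.ncard_diff_singleton_of_mem (Set.mem_univ v)]
    rw [Set.ncard_univ, Nat.card_eq_fintype_card]
  have h3 : 0 < Fintype.card V := Fintype.card_pos_iff.mpr ⟨v⟩
  unfold rk
  omega

lemma comp_has_leaf (N : Net V X) (hac : N.Acyclic) (htc : N.TreeChild) (x : V) :
    ∃ l, l ∈ N.comp x ∧ N.IsLeaf l := by
  suffices h : ∀ n v, Fintype.card V - N.rk v ≤ n → v ∈ N.comp x →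
      ∃ l, l ∈ N.comp x ∧ N.IsLeaf l from
    h (Fintype.card V) x (by omega) Relation.ReflTransGen.refl
  intro n
  induction n with
  | zero =>
    intro v hv _
    have := N.rk_lt_card hac v
    omega
  | succ n ih =>
    intro v hv hvx
    by_cases hl : N.IsLeaf v
    · exact ⟨v, hvx, hl⟩
    obtain ⟨w, hw, htn⟩ := htc v hl
    have h1 : N.rk v < N.rk w := N.rk_lt hac hw
    have h2 := N.rk_lt_card hac w
    exact ih w (by omega) (hvx.tail ⟨hw, htn⟩)

/-- If no node has two distinct tree-children, tree components are chains. -/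
lemma comp_chain (N : Net V X)
    (hdet : ∀ v a b, N.TreeEdge v a → N.TreeEdge v b → a = b) {x u w : V}
    (hu : Relation.ReflTransGen N.TreeEdge x u) (hw : Relation.ReflTransGen N.TreeEdge x w) :
    Relation.ReflTransGen N.TreeEdge u w ∨ Relation.ReflTransGen N.TreeEdge w u := by
  induction hw using Relation.ReflTransGen.head_induction_on generalizing u with
  | refl => exact Or.inr hu
  | head hab hbw ih =>
    rcases hu.cases_head with rfl | ⟨b', hb', hu'⟩
    · exact Or.inl (Relation.ReflTransGen.head hab hbw)
    · rw [hdet _ _ _ hb' hab] at hu'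
      exact ih hu'

/-- Under `hdet`, two leaves in a common component are equal. -/
lemma comp_leaf_unique (N : Net V X)
    (hdet : ∀ v a b, N.TreeEdge v a → N.TreeEdge v b → a = b) {x l l' : V}
    (hl : l ∈ N.comp x) (hl' : l' ∈ N.comp x)
    (h1 : N.IsLeaf l) (h2 : N.IsLeaf l') : l = l' := by
  rcases N.comp_chain hdet hl hl' with h | h
  · rcases h.cases_head with rfl | ⟨b, hb, _⟩
    · rfl
    · exact absurd hb.1 (N.leaf_no_edge h1)
  · rcases h.cases_head with rfl | ⟨b, hb, _⟩
    · rfl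
    · exact absurd hb.1 (N.leaf_no_edge h2)

end Net

namespace Net

variable {V X : Type} [Fintype V] [Fintype X]

lemma compRootSet_ncard (N : Net V X) (hp : N.IsPhylo) :
    {v | N.CompRoot v}.ncard = {v | N.IsRet v}.ncard + 1 := by
  have hnr : ¬ N.IsRet N.root := by
    unfold IsRet; rw [hp.rootIn]; omega
  have : {v | N.CompRoot v} = insert N.root {v | N.IsRet v} := by
    ext v; simp only [Set.mem_setOf_eq, Set.mem_insert_iff, CompRoot]
  rw [this, Set.ncard_insert_of_notMem (show N.root ∉ {v | N.IsRet v} from hnr) (Set.toFinite _)]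

lemma compRoot_ncard_le (N : Net V X) (hp : N.IsPhylo) (htc : N.TreeChild) :
    {v | N.CompRoot v}.ncard ≤ Fintype.card X := by
  have hσ : ∀ x : V, ∃ t : X, N.leaf t ∈ N.comp x := by
    intro x
    obtain ⟨l, hl, hleaf⟩ := N.comp_has_leaf hp.acyclic htc x
    obtain ⟨t, ht⟩ := hp.leafSurj l hleaf
    exact ⟨t, ht ▸ hl⟩
  choose σ hσ using hσ
  have hinj : Set.InjOn σ {v | N.CompRoot v} := by
    intro x hx y hy hxy
    exact N.compRoot_unique hp hx hy (hσ x) (hxy ▸ hσ y)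
  calc {v | N.CompRoot v}.ncard = (σ '' {v | N.CompRoot v}).ncard :=
        (Set.ncard_image_of_injOn hinj).symm
    _ ≤ (Set.univ : Set X).ncard := Set.ncard_le_ncard (Set.subset_univ _) (Set.toFinite _)
    _ = Fintype.card X := by rw [Set.ncard_univ, Nat.card_eq_fintype_card]

lemma compRoot_ncard_ge (N : Net V X) (hp : N.IsPhylo)
    (hdet : ∀ v a b, N.TreeEdge v a → N.TreeEdge v b → a = b) :
    Fintype.card X ≤ {v | N.CompRoot v}.ncard := by
  have hρ : ∀ t : X, ∃ x, N.CompRoot x ∧ N.leaf t ∈ N.comp x := fun t =>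
    N.exists_compRoot hp (N.leaf t)
  choose ρ h1 h2 using hρ
  have hinj : Set.InjOn ρ (Set.univ : Set X) := by
    intro s _ t _ hst
    have : N.leaf s = N.leaf t :=
      N.comp_leaf_unique hdet (h2 s) (hst ▸ h2 t) (hp.leafIsLeaf s) (hp.leafIsLeaf t)
    exact hp.leafInj this
  have hsub : ρ '' Set.univ ⊆ {v | N.CompRoot v} := by
    rintro _ ⟨t, _, rfl⟩; exact h1 t
  calc Fintype.card X = (Set.univ : Set X).ncard := by rw [Set.ncard_univ, Nat.card_eq_fintype_card]
    _ = (ρ '' Set.univ).ncard := (Set.ncard_image_of_injOn hinj).symm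
    _ ≤ {v | N.CompRoot v}.ncard := Set.ncard_le_ncard hsub (Set.toFinite _)

lemma ret_ncard_le (N : Net V X) (hp : N.IsPhylo) (htc : N.TreeChild) :
    {v | N.IsRet v}.ncard + 1 ≤ Fintype.card X := by
  rw [← N.compRootSet_ncard hp]; exact N.compRoot_ncard_le hp htc

lemma ret_ncard_eq (N : Net V X) (hp : N.IsPhylo) (htc : N.TreeChild)
    (hdet : ∀ v a b, N.TreeEdge v a → N.TreeEdge v b → a = b) :
    {v | N.IsRet v}.ncard = Fintype.card X - 1 := by
  have h1 := N.ret_ncard_le hp htc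
  have h2 := N.compRoot_ncard_ge hp hdet
  have h3 := N.compRootSet_ncard hp
  omega

lemma comp_leaf_ncard (N : Net V X) (hac : N.Acyclic) (htc : N.TreeChild)
    (hdet : ∀ v a b, N.TreeEdge v a → N.TreeEdge v b → a = b) (x : V) :
    {v ∈ N.comp x | N.IsLeaf v}.ncard = 1 := by
  obtain ⟨l, hl, hleaf⟩ := N.comp_has_leaf hac htc x
  rw [Set.ncard_eq_one]
  refine ⟨l, ?_⟩
  ext v
  simp only [Set.mem_setOf_eq, Set.mem_singleton_iff]
  constructor
  · rintro ⟨hv, hvl⟩; exact N.comp_leaf_unique hdet hv hl hvl hleaf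
  · rintro rfl; exact ⟨hl, hleaf⟩

end Net

open Sum in
/-- Add a new reticulation splitting the tree-children `c1, c2` of `t`. -/
def stepE {W X : Type} (M : Net W X) (t c1 c2 : W) : W ⊕ Bool → W ⊕ Bool → Prop :=
  fun p q => match p, q with
  | inl a, inl b => M.E a b ∧ ¬(a = t ∧ (b = c1 ∨ b = c2))
  | inl a, inr _ => a = t
  | inr u, inl b => (u = false ∧ b = c1) ∨ (u = true ∧ b = c2)
  | inr u, inr w => u = false ∧ w = true

def stepNet {W X : Type} (M : Net W X) (t c1 c2 : W) : Net (W ⊕ Bool) X :=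
  ⟨stepE M t c1 c2, .inl M.root, fun x => .inl (M.leaf x)⟩

namespace StepFacts

variable {W X : Type} [Fintype W] (M : Net W X) (t c1 c2 : W)

@[simp] lemma stepE_inl_inl {a b : W} :
    stepE M t c1 c2 (.inl a) (.inl b) ↔ M.E a b ∧ ¬(a = t ∧ (b = c1 ∨ b = c2)) := Iff.rfl
@[simp] lemma stepE_inl_inr {a : W} {u : Bool} :
    stepE M t c1 c2 (.inl a) (.inr u) ↔ a = t := Iff.rfl
@[simp] lemma stepE_inr_inl {u : Bool} {b : W} :
    stepE M t c1 c2 (.inr u) (.inl b) ↔ (u = false ∧ b = c1) ∨ (u = true ∧ b = c2) := Iff.rfl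
@[simp] lemma stepE_inr_inr {u w : Bool} :
    stepE M t c1 c2 (.inr u) (.inr w) ↔ u = false ∧ w = true := Iff.rfl

section Facts

variable (hb : M.IsBinaryNet) (h1 : M.E t c1) (h2 : M.E t c2) (hc : c1 ≠ c2)
  (htn1 : M.IsTreeNode c1) (htn2 : M.IsTreeNode c2)

include hb h1 h2 hc in
lemma out_t : {w | M.E t w} = {c1, c2} := by
  have hsub : ({c1, c2} : Set W) ⊆ {w | M.E t w} := by
    rintro a (rfl | rfl) <;> assumption
  have hn2 : ({c1, c2} : Set W).ncard = 2 := Set.ncard_pair hc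
  have hnl : ¬ M.IsLeaf t := M.not_leaf_of_edge h1
  have hdeg : M.outDeg t = 2 := by
    rcases hb.deg t hnl with ⟨_, h⟩ | ⟨_, h⟩
    · exact h
    · exfalso
      have := Set.ncard_le_ncard hsub (Set.toFinite _)
      rw [hn2] at this
      unfold Net.outDeg at h
      omega
  exact (Set.eq_of_subset_of_ncard_le hsub (by rw [hn2]; exact le_of_eq hdeg)
    (Set.toFinite _)).symm

include hb h1 htn1 in
lemma in_c1 : {u | M.E u c1} = {t} := by
  have h0 : {u | M.E u c1}.ncard ≤ 1 := htn1
  have hsub : ({t} : Set W) ⊆ {u | M.E u c1} := by rintro a rfl; exact h1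
  exact (Set.eq_of_subset_of_ncard_le hsub (by simpa using h0) (Set.toFinite _)).symm

include hb h2 htn2 in
lemma in_c2 : {u | M.E u c2} = {t} := by
  have h0 : {u | M.E u c2}.ncard ≤ 1 := htn2
  have hsub : ({t} : Set W) ⊆ {u | M.E u c2} := by rintro a rfl; exact h2
  exact (Set.eq_of_subset_of_ncard_le hsub (by simpa using h0) (Set.toFinite _)).symm

include hb h1 in
lemma t_ne_c1 : t ≠ c1 := M.acyclic_ne hb.acyclic h1
include hb h2 in
lemma t_ne_c2 : t ≠ c2 := M.acyclic_ne hb.acyclic h2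
include hb h1 in
lemma c1_ne_root : c1 ≠ M.root := fun h => M.root_no_pred hb.toIsPhylo (h ▸ h1)
include hb h2 in
lemma c2_ne_root : c2 ≠ M.root := fun h => M.root_no_pred hb.toIsPhylo (h ▸ h2)

-- Neighbor sets in the step network
lemma out_inl_ne {v : W} (hv : v ≠ t) :
    {w | (stepNet M t c1 c2).E (.inl v) w} = Sum.inl '' {w | M.E v w} := by
  ext w
  cases w with
  | inl b => simp [stepNet, hv]
  | inr u => simp [stepNet, hv]

include hb h1 h2 hc in
lemma out_inl_t :
    {w | (stepNet M t c1 c2).E (.inl t) w} = {.inr false, .inr true} := by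
  have ht := out_t M t c1 c2 hb h1 h2 hc
  ext w
  cases w with
  | inl b =>
    constructor
    · rintro ⟨hE, hne⟩
      exfalso
      apply hne
      refine ⟨rfl, ?_⟩
      have hmem : b ∈ ({c1, c2} : Set W) := ht ▸ hE
      simpa using hmem
    · intro h
      simp at h
  | inr u => cases u <;> simp [stepNet]

lemma out_inr_false :
    {w | (stepNet M t c1 c2).E (.inr false) w} = {.inl c1, .inr true} := by
  ext w
  cases w with
  | inl b => simp [stepNet]
  | inr u => simp [stepNet]

lemma out_inr_true :
    {w | (stepNet M t c1 c2).E (.inr true) w} = {.inl c2} := by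
  ext w
  cases w with
  | inl b => simp [stepNet]
  | inr u => simp [stepNet]

lemma in_inl_ne {v : W} (hv1 : v ≠ c1) (hv2 : v ≠ c2) :
    {u | (stepNet M t c1 c2).E u (.inl v)} = Sum.inl '' {u | M.E u v} := by
  ext u
  cases u with
  | inl a => simp [stepNet, hv1, hv2]
  | inr u => simp [stepNet, hv1, hv2]

include hb h1 htn1 in
lemma in_inl_c1 (hc : c1 ≠ c2) :
    {u | (stepNet M t c1 c2).E u (.inl c1)} = {.inr false} := by
  have hpred := in_c1 M t c1 hb h1 htn1
  ext u
  cases u with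
  | inl a =>
    constructor
    · rintro ⟨hE, hne⟩
      exfalso
      apply hne
      have : a ∈ ({t} : Set W) := hpred ▸ hE
      simp at this
      exact ⟨this, Or.inl rfl⟩
    · intro h; simp at h
  | inr u => cases u <;> simp [stepNet, hc, Ne.symm hc]

include hb h2 htn2 in
lemma in_inl_c2 (hc : c1 ≠ c2) :
    {u | (stepNet M t c1 c2).E u (.inl c2)} = {.inr true} := by
  have hpred := in_c2 M t c2 hb h2 htn2
  ext u
  cases u with
  | inl a =>
    constructor
    · rintro ⟨hE, hne⟩
      exfalso
      apply hne
      have : a ∈ ({t} : Set W) := hpred ▸ hE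
      simp at this
      exact ⟨this, Or.inr rfl⟩
    · intro h; simp at h
  | inr u => cases u <;> simp [stepNet, hc, Ne.symm hc]

lemma in_inr_false :
    {u | (stepNet M t c1 c2).E u (.inr false)} = {.inl t} := by
  ext u
  cases u with
  | inl a => simp [stepNet]
  | inr u => simp [stepNet]

lemma in_inr_true :
    {u | (stepNet M t c1 c2).E u (.inr true)} = {.inl t, .inr false} := by
  ext u
  cases u with
  | inl a => simp [stepNet]
  | inr u => simp [stepNet]

end Facts
end StepFacts

namespace StepFacts

variable {W X : Type} [Fintype W] (M : Net W X) (t c1 c2 : W)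

/-- rank function for acyclicity of the step network -/
private noncomputable def g : W ⊕ Bool → ℕ :=
  fun p => match p with
  | .inl a => 3 * M.rk a
  | .inr false => 3 * M.rk t + 1
  | .inr true => 3 * M.rk t + 2

private lemma lt_of_transGen_lt {a b : ℕ} (h : Relation.TransGen (fun x y : ℕ => x < y) a b) :
    a < b := by
  induction h with
  | single h => exact h
  | tail _ h ih => omega


section Facts2

variable (hb : M.IsBinaryNet) (h1 : M.E t c1) (h2 : M.E t c2) (hc : c1 ≠ c2)
  (htn1 : M.IsTreeNode c1) (htn2 : M.IsTreeNode c2)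

include hb h1 h2 hc htn1 htn2

lemma outDeg_inl_ne {v : W} (hv : v ≠ t) :
    (stepNet M t c1 c2).outDeg (.inl v) = M.outDeg v := by
  unfold Net.outDeg
  rw [out_inl_ne M t c1 c2 hv, Set.ncard_image_of_injective _ Sum.inl_injective]

lemma outDeg_inl_t : (stepNet M t c1 c2).outDeg (.inl t) = 2 := by
  unfold Net.outDeg
  rw [out_inl_t M t c1 c2 hb h1 h2 hc, Set.ncard_pair (by simp)]

lemma outDeg_inr_false : (stepNet M t c1 c2).outDeg (.inr false) = 2 := by
  unfold Net.outDeg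
  rw [out_inr_false M t c1 c2, Set.ncard_pair (by simp)]

lemma outDeg_inr_true : (stepNet M t c1 c2).outDeg (.inr true) = 1 := by
  unfold Net.outDeg
  rw [out_inr_true M t c1 c2, Set.ncard_singleton]

lemma inDeg_inl_ne {v : W} (hv1 : v ≠ c1) (hv2 : v ≠ c2) :
    (stepNet M t c1 c2).inDeg (.inl v) = M.inDeg v := by
  unfold Net.inDeg
  rw [in_inl_ne M t c1 c2 hv1 hv2, Set.ncard_image_of_injective _ Sum.inl_injective]

lemma inDeg_inl_c1 : (stepNet M t c1 c2).inDeg (.inl c1) = 1 := by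
  unfold Net.inDeg
  rw [in_inl_c1 M t c1 c2 hb h1 htn1 hc, Set.ncard_singleton]

lemma inDeg_inl_c2 : (stepNet M t c1 c2).inDeg (.inl c2) = 1 := by
  unfold Net.inDeg
  rw [in_inl_c2 M t c1 c2 hb h2 htn2 hc, Set.ncard_singleton]

lemma inDeg_inr_false : (stepNet M t c1 c2).inDeg (.inr false) = 1 := by
  unfold Net.inDeg
  rw [in_inr_false M t c1 c2, Set.ncard_singleton]

lemma inDeg_inr_true : (stepNet M t c1 c2).inDeg (.inr true) = 2 := by
  unfold Net.inDeg
  rw [in_inr_true M t c1 c2, Set.ncard_pair (by simp)]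

lemma step_mono {p q : W ⊕ Bool} (h : (stepNet M t c1 c2).E p q) :
    g M t p < g M t q := by
  have hr1 : M.rk t < M.rk c1 := M.rk_lt hb.acyclic h1
  have hr2 : M.rk t < M.rk c2 := M.rk_lt hb.acyclic h2
  cases p with
  | inl a =>
    cases q with
    | inl b =>
      have : M.rk a < M.rk b := M.rk_lt hb.acyclic h.1
      simp only [g]; omega
    | inr u =>
      have ha : a = t := h
      subst ha
      cases u <;> (simp only [g]; omega)
  | inr u =>
    cases q with
    | inl b =>
      rcases h with ⟨rfl, rfl⟩ | ⟨rfl, rfl⟩ <;> (simp only [g]; omega)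
    | inr w =>
      rcases h with ⟨rfl, rfl⟩
      simp only [g]; omega

lemma step_acyclic : (stepNet M t c1 c2).Acyclic := by
  intro v h
  have hmono : ∀ a b, (stepNet M t c1 c2).E a b → g M t a < g M t b :=
    fun a b hab => step_mono M t c1 c2 hb h1 h2 hc htn1 htn2 hab
  have : Relation.TransGen (fun a b : ℕ => a < b) (g M t v) (g M t v) :=
    Relation.TransGen.lift _ hmono v v h
  exact absurd (lt_of_transGen_lt this) (lt_irrefl _)

lemma step_lift_rtg {a b : W} (h : Relation.ReflTransGen M.E a b) :
    Relation.ReflTransGen (stepNet M t c1 c2).E (.inl a) (.inl b) := by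
  induction h with
  | refl => exact Relation.ReflTransGen.refl
  | @tail b' c' hbc hcd ih =>
    by_cases hsp : b' = t ∧ (c' = c1 ∨ c' = c2)
    · obtain ⟨hbt, hcc⟩ := hsp
      rcases hcc with hcc | hcc
      · have e1 : (stepNet M t c1 c2).E (.inl b') (.inr false) := hbt
        have e2 : (stepNet M t c1 c2).E (.inr false) (.inl c') := Or.inl ⟨rfl, hcc⟩
        exact (ih.tail e1).tail e2
      · have e1 : (stepNet M t c1 c2).E (.inl b') (.inr true) := hbt
        have e2 : (stepNet M t c1 c2).E (.inr true) (.inl c') := Or.inr ⟨rfl, hcc⟩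
        exact (ih.tail e1).tail e2
    · exact ih.tail ⟨hcd, hsp⟩

lemma step_reach (v : W ⊕ Bool) :
    Relation.ReflTransGen (stepNet M t c1 c2).E (stepNet M t c1 c2).root v := by
  cases v with
  | inl a => exact step_lift_rtg M t c1 c2 hb h1 h2 hc htn1 htn2 (hb.reach a)
  | inr u =>
    exact (step_lift_rtg M t c1 c2 hb h1 h2 hc htn1 htn2 (hb.reach t)).tail
      (show (stepNet M t c1 c2).E (.inl t) (.inr u) from rfl)

lemma step_isPhylo : (stepNet M t c1 c2).IsPhylo := by
  have htne1 := t_ne_c1 M t c1 hb h1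
  have htne2 := t_ne_c2 M t c2 hb h2
  have hrne1 := c1_ne_root M t c1 hb h1
  have hrne2 := c2_ne_root M t c2 hb h2
  have ht_out2 : M.outDeg t = 2 := by
    unfold Net.outDeg
    rw [out_t M t c1 c2 hb h1 h2 hc, Set.ncard_pair hc]
  refine ⟨step_acyclic M t c1 c2 hb h1 h2 hc htn1 htn2, ?_, 
    step_reach M t c1 c2 hb h1 h2 hc htn1 htn2, ?_, ?_, ?_, ?_⟩
  · -- rootIn
    rw [show (stepNet M t c1 c2).root = .inl M.root from rfl,
      inDeg_inl_ne M t c1 c2 hb h1 h2 hc htn1 htn2 (Ne.symm hrne1) (Ne.symm hrne2)]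
    exact hb.rootIn
  · -- leafInj
    intro x y h
    exact hb.leafInj (Sum.inl_injective h)
  · -- leafIsLeaf
    intro x
    have hlt : M.leaf x ≠ t := by
      intro h
      exact M.not_leaf_of_edge (h ▸ h1) (hb.leafIsLeaf x)
    show (stepNet M t c1 c2).outDeg (.inl (M.leaf x)) = 0
    rw [outDeg_inl_ne M t c1 c2 hb h1 h2 hc htn1 htn2 hlt]
    exact hb.leafIsLeaf x
  · -- leafSurj
    intro v hv
    cases v with
    | inl a =>
      by_cases hat : a = t
      · exfalso
        rw [hat] at hv
        have := outDeg_inl_t M t c1 c2 hb h1 h2 hc htn1 htn2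
        unfold Net.IsLeaf at hv
        omega
      · have : M.IsLeaf a := by
          unfold Net.IsLeaf at hv ⊢
          rw [outDeg_inl_ne M t c1 c2 hb h1 h2 hc htn1 htn2 hat] at hv
          exact hv
        obtain ⟨x, hx⟩ := hb.leafSurj a this
        exact ⟨x, by rw [show (stepNet M t c1 c2).leaf x = .inl (M.leaf x) from rfl, hx]⟩
    | inr u =>
      exfalso
      unfold Net.IsLeaf at hv
      cases u
      · rw [outDeg_inr_false M t c1 c2 hb h1 h2 hc htn1 htn2] at hv; omega
      · rw [outDeg_inr_true M t c1 c2 hb h1 h2 hc htn1 htn2] at hv; omega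
  · -- leafIn
    intro x
    show (stepNet M t c1 c2).inDeg (.inl (M.leaf x)) = 1
    by_cases hx1 : M.leaf x = c1
    · rw [hx1]; exact inDeg_inl_c1 M t c1 c2 hb h1 h2 hc htn1 htn2
    by_cases hx2 : M.leaf x = c2
    · rw [hx2]; exact inDeg_inl_c2 M t c1 c2 hb h1 h2 hc htn1 htn2
    rw [inDeg_inl_ne M t c1 c2 hb h1 h2 hc htn1 htn2 hx1 hx2]
    exact hb.leafIn x

lemma step_isBinary : (stepNet M t c1 c2).IsBinaryNet := by
  refine ⟨step_isPhylo M t c1 c2 hb h1 h2 hc htn1 htn2, ?_⟩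
  intro v hv
  cases v with
  | inr u =>
    cases u
    · left
      rw [inDeg_inr_false M t c1 c2 hb h1 h2 hc htn1 htn2,
        outDeg_inr_false M t c1 c2 hb h1 h2 hc htn1 htn2]
      omega
    · right
      rw [inDeg_inr_true M t c1 c2 hb h1 h2 hc htn1 htn2,
        outDeg_inr_true M t c1 c2 hb h1 h2 hc htn1 htn2]
      omega
  | inl a =>
    by_cases hat : a = t
    · left
      rw [hat]
      constructor
      · have htne1 := t_ne_c1 M t c1 hb h1
        have htne2 := t_ne_c2 M t c2 hb h2
        rw [inDeg_inl_ne M t c1 c2 hb h1 h2 hc htn1 htn2 htne1 htne2]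
        have ht_out2 : M.outDeg t = 2 := by
          unfold Net.outDeg
          rw [out_t M t c1 c2 hb h1 h2 hc, Set.ncard_pair hc]
        rcases hb.deg t (M.not_leaf_of_edge h1) with ⟨hi, _⟩ | ⟨_, ho⟩
        · exact hi
        · omega
      · exact outDeg_inl_t M t c1 c2 hb h1 h2 hc htn1 htn2
    · have hnl : ¬ M.IsLeaf a := by
        intro h
        apply hv
        show (stepNet M t c1 c2).outDeg (.inl a) = 0
        rw [outDeg_inl_ne M t c1 c2 hb h1 h2 hc htn1 htn2 hat]
        exact h
      have hout : (stepNet M t c1 c2).outDeg (.inl a) = M.outDeg a :=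
        outDeg_inl_ne M t c1 c2 hb h1 h2 hc htn1 htn2 hat
      rcases hb.deg a hnl with ⟨hi, ho⟩ | ⟨hi, ho⟩
      · left
        refine ⟨?_, by rw [hout]; exact ho⟩
        by_cases ha1 : a = c1
        · rw [ha1, inDeg_inl_c1 M t c1 c2 hb h1 h2 hc htn1 htn2]
        by_cases ha2 : a = c2
        · rw [ha2, inDeg_inl_c2 M t c1 c2 hb h1 h2 hc htn1 htn2]
        rw [inDeg_inl_ne M t c1 c2 hb h1 h2 hc htn1 htn2 ha1 ha2]
        exact hi
      · right
        have ha1 : a ≠ c1 := by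
          intro h; subst h
          unfold Net.IsTreeNode at htn1
          omega
        have ha2 : a ≠ c2 := by
          intro h; subst h
          unfold Net.IsTreeNode at htn2
          omega
        refine ⟨?_, by rw [hout]; exact ho⟩
        rw [inDeg_inl_ne M t c1 c2 hb h1 h2 hc htn1 htn2 ha1 ha2]
        exact hi

lemma step_treeChild (htc : M.TreeChild) : (stepNet M t c1 c2).TreeChild := by
  intro v hv
  have htn_c1' : (stepNet M t c1 c2).IsTreeNode (.inl c1) := by
    show (stepNet M t c1 c2).inDeg (.inl c1) ≤ 1
    rw [inDeg_inl_c1 M t c1 c2 hb h1 h2 hc htn1 htn2]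
  have htn_c2' : (stepNet M t c1 c2).IsTreeNode (.inl c2) := by
    show (stepNet M t c1 c2).inDeg (.inl c2) ≤ 1
    rw [inDeg_inl_c2 M t c1 c2 hb h1 h2 hc htn1 htn2]
  cases v with
  | inr u =>
    cases u
    · exact ⟨.inl c1, Or.inl ⟨rfl, rfl⟩, htn_c1'⟩
    · exact ⟨.inl c2, Or.inr ⟨rfl, rfl⟩, htn_c2'⟩
  | inl a =>
    by_cases hat : a = t
    · refine ⟨.inr false, hat, ?_⟩
      show (stepNet M t c1 c2).inDeg (.inr false) ≤ 1
      rw [inDeg_inr_false M t c1 c2 hb h1 h2 hc htn1 htn2]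
    · have hnl : ¬ M.IsLeaf a := by
        intro h
        apply hv
        show (stepNet M t c1 c2).outDeg (.inl a) = 0
        rw [outDeg_inl_ne M t c1 c2 hb h1 h2 hc htn1 htn2 hat]
        exact h
      obtain ⟨w, hw, htw⟩ := htc a hnl
      refine ⟨.inl w, ⟨hw, fun h => hat h.1⟩, ?_⟩
      by_cases hw1 : w = c1
      · rw [hw1]; exact htn_c1'
      by_cases hw2 : w = c2
      · rw [hw2]; exact htn_c2'
      show (stepNet M t c1 c2).inDeg (.inl w) ≤ 1
      rw [inDeg_inl_ne M t c1 c2 hb h1 h2 hc htn1 htn2 hw1 hw2]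
      exact htw

lemma step_ret_ncard :
    {v | (stepNet M t c1 c2).IsRet v}.ncard = {v | M.IsRet v}.ncard + 1 := by
  have hset : {v | (stepNet M t c1 c2).IsRet v}
      = insert (Sum.inr true) (Sum.inl '' {v | M.IsRet v}) := by
    ext v
    simp only [Set.mem_setOf_eq, Set.mem_insert_iff, Set.mem_image]
    cases v with
    | inr u =>
      cases u
      · simp only [Net.IsRet]
        rw [inDeg_inr_false M t c1 c2 hb h1 h2 hc htn1 htn2]
        simp
      · simp only [Net.IsRet]
        rw [inDeg_inr_true M t c1 c2 hb h1 h2 hc htn1 htn2]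
        simp
    | inl a =>
      simp only [Net.IsRet]
      constructor
      · intro h
        right
        refine ⟨a, ?_, rfl⟩
        by_cases ha1 : a = c1
        · rw [ha1, inDeg_inl_c1 M t c1 c2 hb h1 h2 hc htn1 htn2] at h; omega
        by_cases ha2 : a = c2
        · rw [ha2, inDeg_inl_c2 M t c1 c2 hb h1 h2 hc htn1 htn2] at h; omega
        rw [inDeg_inl_ne M t c1 c2 hb h1 h2 hc htn1 htn2 ha1 ha2] at h
        exact h
      · rintro (h | ⟨b, hb', hba⟩)
        · exact absurd h (by simp)
        · have hba2 : b = a := Sum.inl_injective hba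
          rw [hba2] at hb'
          have ha1 : a ≠ c1 := by
            intro h
            rw [h] at hb'
            unfold Net.IsTreeNode at htn1
            omega
          have ha2 : a ≠ c2 := by
            intro h
            rw [h] at hb'
            unfold Net.IsTreeNode at htn2
            omega
          rw [inDeg_inl_ne M t c1 c2 hb h1 h2 hc htn1 htn2 ha1 ha2]
          exact hb'
  rw [hset, Set.ncard_insert_of_notMem (by simp) (Set.toFinite _),
    Set.ncard_image_of_injective _ Sum.inl_injective]

end Facts2
end StepFacts

lemma display_refl {V X : Type} (N : Net V X) : Display N N := by
  refine ⟨N.E, id, fun u v h => h, Function.injective_id, fun x => rfl, ?_, ?_, ?_⟩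
  · intro a b h
    exact Relation.ReflTransGen.single ⟨h, Or.inl rfl⟩
  · intro a
    exact ⟨rfl, rfl⟩
  · intro v hv _
    exact absurd ⟨v, rfl⟩ hv

/-- The modified embedded copy relation after a step. -/
def stepS {W : Type} (S : W → W → Prop) (t c1 c2 : W) : W ⊕ Bool → W ⊕ Bool → Prop :=
  fun p q => match p, q with
  | .inl a, .inl b => S a b ∧ ¬(a = t ∧ (b = c1 ∨ b = c2))
  | .inl a, .inr u => a = t ∧ ((u = false ∧ S t c1) ∨ (u = true ∧ S t c2))
  | .inr u, .inl b => (u = false ∧ b = c1 ∧ S t c1) ∨ (u = true ∧ b = c2 ∧ S t c2)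
  | .inr _, .inr _ => False

namespace StepS

variable {W : Type} (S : W → W → Prop) (t c1 c2 : W)

@[simp] lemma inl_inl {a b : W} :
    stepS S t c1 c2 (.inl a) (.inl b) ↔ S a b ∧ ¬(a = t ∧ (b = c1 ∨ b = c2)) := Iff.rfl
@[simp] lemma inl_inr {a : W} {u : Bool} :
    stepS S t c1 c2 (.inl a) (.inr u) ↔ a = t ∧ ((u = false ∧ S t c1) ∨ (u = true ∧ S t c2)) :=
  Iff.rfl
@[simp] lemma inr_inl {u : Bool} {b : W} :
    stepS S t c1 c2 (.inr u) (.inl b) ↔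
      (u = false ∧ b = c1 ∧ S t c1) ∨ (u = true ∧ b = c2 ∧ S t c2) := Iff.rfl
@[simp] lemma inr_inr {u w : Bool} : ¬ stepS S t c1 c2 (.inr u) (.inr w) := fun h => h

end StepS

/-- Renaming of out-neighbors of `t`. -/
noncomputable def gS {W : Type} (c1 c2 : W) : W → W ⊕ Bool := fun b =>
  open Classical in
  if b = c1 then .inr false else if b = c2 then .inr true else .inl b
/-- Renaming of in-neighbors of `c1`. -/
noncomputable def h1S {W : Type} (t : W) : W → W ⊕ Bool := fun u =>
  open Classical in
  if u = t then .inr false else .inl u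
/-- Renaming of in-neighbors of `c2`. -/
noncomputable def h2S {W : Type} (t : W) : W → W ⊕ Bool := fun u =>
  open Classical in
  if u = t then .inr true else .inl u

namespace StepS

variable {W : Type} (S : W → W → Prop) (t c1 c2 : W)
variable (hc : c1 ≠ c2)

include hc in
lemma gS_inj : Function.Injective (gS (W := W) c1 c2) := by
  intro a b h
  by_cases ha1 : a = c1 <;> by_cases hb1 : b = c1 <;>
    by_cases ha2 : a = c2 <;> by_cases hb2 : b = c2 <;>
    simp_all [gS]

lemma h1S_inj : Function.Injective (h1S (W := W) t) := by
  intro a b h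
  by_cases ha : a = t <;> by_cases hb : b = t <;> simp_all [h1S]

lemma h2S_inj : Function.Injective (h2S (W := W) t) := by
  intro a b h
  by_cases ha : a = t <;> by_cases hb : b = t <;> simp_all [h2S]

lemma out_inl_ne {v : W} (hv : v ≠ t) :
    {w | stepS S t c1 c2 (.inl v) w} = Sum.inl '' {w | S v w} := by
  ext w
  cases w with
  | inl b => simp [hv]
  | inr u => simp [hv]

include hc in
lemma out_inl_t : {w | stepS S t c1 c2 (.inl t) w} = gS c1 c2 '' {b | S t b} := by
  ext w
  cases w with
  | inl b =>
    simp only [Set.mem_setOf_eq, inl_inl, Set.mem_image]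
    constructor
    · rintro ⟨hS, hne⟩
      have hb1 : b ≠ c1 := fun h => hne ⟨trivial, Or.inl h⟩
      have hb2 : b ≠ c2 := fun h => hne ⟨trivial, Or.inr h⟩
      exact ⟨b, hS, by simp [gS, hb1, hb2]⟩
    · rintro ⟨b0, hS, hgb⟩
      unfold gS at hgb
      by_cases hb1 : b0 = c1
      · rw [if_pos hb1] at hgb
        exact absurd hgb (by simp)
      by_cases hb2 : b0 = c2
      · rw [if_neg hb1, if_pos hb2] at hgb
        exact absurd hgb (by simp)
      rw [if_neg hb1, if_neg hb2] at hgb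
      obtain rfl : b0 = b := Sum.inl_injective hgb
      exact ⟨hS, fun h => h.2.elim hb1 hb2⟩
  | inr u =>
    simp only [Set.mem_setOf_eq, inl_inr, Set.mem_image]
    constructor
    · rintro ⟨-, ⟨hu, hS⟩ | ⟨hu, hS⟩⟩ <;> subst hu
      · exact ⟨c1, hS, by simp [gS]⟩
      · exact ⟨c2, hS, by simp [gS, Ne.symm hc]⟩
    · rintro ⟨b0, hS, hgb⟩
      unfold gS at hgb
      by_cases hb1 : b0 = c1
      · rw [if_pos hb1] at hgb
        have hu : u = false := (Sum.inr.inj hgb).symm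
        subst hb1
        exact ⟨by trivial, Or.inl ⟨hu, hS⟩⟩
      by_cases hb2 : b0 = c2
      · rw [if_neg hb1, if_pos hb2] at hgb
        have hu : u = true := (Sum.inr.inj hgb).symm
        subst hb2
        exact ⟨by trivial, Or.inr ⟨hu, hS⟩⟩
      rw [if_neg hb1, if_neg hb2] at hgb
      exact absurd hgb (by simp)

lemma in_inl_ne {v : W} (hv1 : v ≠ c1) (hv2 : v ≠ c2) :
    {u | stepS S t c1 c2 u (.inl v)} = Sum.inl '' {u | S u v} := by
  ext u
  cases u with
  | inl a => simp [hv1, hv2]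
  | inr u => simp [hv1, hv2]

include hc in
lemma in_inl_c1 : {u | stepS S t c1 c2 u (.inl c1)} = h1S t '' {u | S u c1} := by
  ext u
  cases u with
  | inl a =>
    simp only [Set.mem_setOf_eq, inl_inl, Set.mem_image]
    constructor
    · rintro ⟨hS, hne⟩
      have hat : a ≠ t := fun h => hne ⟨h, Or.inl trivial⟩
      exact ⟨a, hS, by simp [h1S, hat]⟩
    · rintro ⟨a0, hS, hga⟩
      unfold h1S at hga
      by_cases hat : a0 = t
      · rw [if_pos hat] at hga
        exact absurd hga (by simp)
      rw [if_neg hat] at hga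
      obtain rfl : a0 = a := Sum.inl_injective hga
      exact ⟨hS, fun h => hat h.1⟩
  | inr u =>
    simp only [Set.mem_setOf_eq, inr_inl, Set.mem_image]
    constructor
    · rintro (⟨hu, -, hS⟩ | ⟨hu, hcc, -⟩)
      · subst hu
        exact ⟨t, hS, by simp [h1S]⟩
      · exact absurd hcc hc
    · rintro ⟨a0, hS, hga⟩
      unfold h1S at hga
      by_cases hat : a0 = t
      · rw [if_pos hat] at hga
        have hu : u = false := (Sum.inr.inj hga).symm
        subst hat
        exact Or.inl ⟨hu, by trivial, hS⟩
      · rw [if_neg hat] at hga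
        exact absurd hga (by simp)

include hc in
lemma in_inl_c2 : {u | stepS S t c1 c2 u (.inl c2)} = h2S t '' {u | S u c2} := by
  ext u
  cases u with
  | inl a =>
    simp only [Set.mem_setOf_eq, inl_inl, Set.mem_image]
    constructor
    · rintro ⟨hS, hne⟩
      have hat : a ≠ t := fun h => hne ⟨h, Or.inr trivial⟩
      exact ⟨a, hS, by simp [h2S, hat]⟩
    · rintro ⟨a0, hS, hga⟩
      unfold h2S at hga
      by_cases hat : a0 = t
      · rw [if_pos hat] at hga
        exact absurd hga (by simp)
      rw [if_neg hat] at hga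
      obtain rfl : a0 = a := Sum.inl_injective hga
      exact ⟨hS, fun h => hat h.1⟩
  | inr u =>
    simp only [Set.mem_setOf_eq, inr_inl, Set.mem_image]
    constructor
    · rintro (⟨hu, hcc, -⟩ | ⟨hu, -, hS⟩)
      · exact absurd hcc.symm hc
      · subst hu
        exact ⟨t, hS, by simp [h2S]⟩
    · rintro ⟨a0, hS, hga⟩
      unfold h2S at hga
      by_cases hat : a0 = t
      · rw [if_pos hat] at hga
        have hu : u = true := (Sum.inr.inj hga).symm
        subst hat
        exact Or.inr ⟨hu, by trivial, hS⟩
      · rw [if_neg hat] at hga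
        exact absurd hga (by simp)

lemma out_inr_false (hS : S t c1) :
    {w | stepS S t c1 c2 (.inr false) w} = {.inl c1} := by
  ext w
  cases w with
  | inl b => simp [hS]
  | inr u => simp

lemma in_inr_false (hS : S t c1) :
    {u | stepS S t c1 c2 u (.inr false)} = {.inl t} := by
  ext u
  cases u with
  | inl a => simp [hS]
  | inr u => simp

lemma out_inr_true (hS : S t c2) :
    {w | stepS S t c1 c2 (.inr true) w} = {.inl c2} := by
  ext w
  cases w with
  | inl b => simp [hS]
  | inr u => simp

lemma in_inr_true (hS : S t c2) :
    {u | stepS S t c1 c2 u (.inr true)} = {.inl t} := by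
  ext u
  cases u with
  | inl a => simp [hS]
  | inr u => simp

end StepS

lemma pathAvoid_step {W : Type} (S : W → W → Prop) (t c1 c2 : W) (A : Set W) {a b : W}
    (h : pathAvoid S A a b) :
    pathAvoid (stepS S t c1 c2) (Sum.inl '' A) (.inl a) (.inl b) := by
  unfold pathAvoid at h ⊢
  suffices h' : ∀ c, Relation.ReflTransGen (fun u v => S u v ∧ (v = b ∨ v ∉ A)) a c →
      Relation.ReflTransGen
        (fun u v => stepS S t c1 c2 u v ∧ (v = Sum.inl b ∨ v ∉ Sum.inl '' A))
        (.inl a) (.inl c) from h' b h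
  intro c hrtg
  induction hrtg with
  | refl => exact Relation.ReflTransGen.refl
  | @tail p q hap hpq ih =>
    obtain ⟨hS, hcond⟩ := hpq
    have hcond' : (Sum.inl q : W ⊕ Bool) = .inl b ∨ (Sum.inl q : W ⊕ Bool) ∉ Sum.inl '' A := by
      rcases hcond with rfl | h
      · exact Or.inl rfl
      · right
        rintro ⟨a', ha', hEq⟩
        exact h ((Sum.inl_injective hEq) ▸ ha')
    by_cases hsp : p = t ∧ (q = c1 ∨ q = c2)
    · obtain ⟨hpt, hqc⟩ := hsp
      have hStc : S t q := hpt ▸ hS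
      rcases hqc with hqc | hqc
      · have hS1 : S t c1 := hqc ▸ hStc
        refine Relation.ReflTransGen.tail (b := (Sum.inr false : W ⊕ Bool))
          (ih.tail ⟨?_, Or.inr ?_⟩) ⟨?_, hcond'⟩
        · exact (⟨hpt, Or.inl ⟨rfl, hS1⟩⟩ :
            stepS S t c1 c2 (.inl p) (.inr false))
        · rintro ⟨a', -, hEq⟩
          exact absurd hEq (by simp)
        · exact (Or.inl ⟨rfl, hqc, hS1⟩ : stepS S t c1 c2 (.inr false) (.inl q))
      · have hS2 : S t c2 := hqc ▸ hStc
        refine Relation.ReflTransGen.tail (b := (Sum.inr true : W ⊕ Bool))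
          (ih.tail ⟨?_, Or.inr ?_⟩) ⟨?_, hcond'⟩
        · exact (⟨hpt, Or.inr ⟨rfl, hS2⟩⟩ :
            stepS S t c1 c2 (.inl p) (.inr true))
        · rintro ⟨a', -, hEq⟩
          exact absurd hEq (by simp)
        · exact (Or.inr ⟨rfl, hqc, hS2⟩ : stepS S t c1 c2 (.inr true) (.inl q))
    · exact ih.tail ⟨⟨hS, hsp⟩, hcond'⟩

lemma display_step {W X VT : Type} [Fintype W] (M : Net W X) (t c1 c2 : W)
    (hc : c1 ≠ c2) (T : Net VT X) (hd : Display T M) :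
    Display T (stepNet M t c1 c2) := by
  obtain ⟨S, φ, hSE, hφ, hleaf, hpath, hdeg, hsupp⟩ := hd
  have hrange : Set.range (Sum.inl ∘ φ : VT → W ⊕ Bool) = Sum.inl '' Set.range φ := by
    rw [Set.range_comp]
  have houtcard : ∀ v : W,
      {w | stepS S t c1 c2 (.inl v) w}.ncard = {w | S v w}.ncard := by
    intro v
    by_cases hv : v = t
    · rw [hv, StepS.out_inl_t S t c1 c2 hc,
        Set.ncard_image_of_injective _ (StepS.gS_inj c1 c2 hc)]
    · rw [StepS.out_inl_ne S t c1 c2 hv,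
        Set.ncard_image_of_injective _ Sum.inl_injective]
  have hincard : ∀ v : W,
      {u | stepS S t c1 c2 u (.inl v)}.ncard = {u | S u v}.ncard := by
    intro v
    by_cases hv1 : v = c1
    · rw [hv1, StepS.in_inl_c1 S t c1 c2 hc,
        Set.ncard_image_of_injective _ (StepS.h1S_inj t)]
    by_cases hv2 : v = c2
    · rw [hv2, StepS.in_inl_c2 S t c1 c2 hc,
        Set.ncard_image_of_injective _ (StepS.h2S_inj t)]
    rw [StepS.in_inl_ne S t c1 c2 hv1 hv2,
      Set.ncard_image_of_injective _ Sum.inl_injective]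
  refine ⟨stepS S t c1 c2, Sum.inl ∘ φ, ?_, Sum.inl_injective.comp hφ, ?_, ?_, ?_, ?_⟩
  · -- contained in edges
    intro p q h
    cases p with
    | inl a =>
      cases q with
      | inl b => exact ⟨hSE a b h.1, h.2⟩
      | inr u => exact h.1
    | inr u =>
      cases q with
      | inl b =>
        rcases h with ⟨hu, hb, -⟩ | ⟨hu, hb, -⟩
        · exact Or.inl ⟨hu, hb⟩
        · exact Or.inr ⟨hu, hb⟩
      | inr w => exact absurd h (StepS.inr_inr S t c1 c2)
  · -- leaves
    intro x
    exact congrArg Sum.inl (hleaf x)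
  · -- paths
    intro a b hab
    have := pathAvoid_step S t c1 c2 (Set.range φ) (hpath a b hab)
    rw [hrange]
    exact this
  · -- degrees at image points
    intro a
    constructor
    · exact (houtcard (φ a)).trans (hdeg a).1
    · exact (hincard (φ a)).trans (hdeg a).2
  · -- support at non-image points
    intro v hv hedge
    cases v with
    | inl w =>
      have hwr : w ∉ Set.range φ := by
        rintro ⟨x, hx⟩
        exact hv ⟨x, congrArg Sum.inl hx⟩
      have hedgeW : (∃ u, S u w) ∨ (∃ q, S w q) := by
        rcases hedge with ⟨u, hu⟩ | ⟨q, hq⟩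
        · cases u with
          | inl a => exact Or.inl ⟨a, hu.1⟩
          | inr u =>
            rcases hu with ⟨-, rfl, hS⟩ | ⟨-, rfl, hS⟩ <;> exact Or.inl ⟨t, hS⟩
        · cases q with
          | inl b => exact Or.inr ⟨b, hq.1⟩
          | inr u =>
            obtain ⟨rfl, h'⟩ := hq
            rcases h' with ⟨-, hS⟩ | ⟨-, hS⟩
            · exact Or.inr ⟨c1, hS⟩
            · exact Or.inr ⟨c2, hS⟩
      obtain ⟨ho, hi⟩ := hsupp w hwr hedgeW
      exact ⟨(houtcard w).trans ho, (hincard w).trans hi⟩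
    | inr u =>
      cases u
      · have hS : S t c1 := by
          rcases hedge with ⟨p, hp⟩ | ⟨q, hq⟩
          · cases p with
            | inl a =>
              rcases hp.2 with ⟨-, hS⟩ | ⟨hfalse, -⟩
              · exact hS
              · exact absurd hfalse (by simp)
            | inr w => exact absurd hp (StepS.inr_inr S t c1 c2)
          · cases q with
            | inl b =>
              rcases hq with ⟨-, -, hS⟩ | ⟨hfalse, -⟩
              · exact hS
              · exact absurd hfalse (by simp)
            | inr w => exact absurd hq (StepS.inr_inr S t c1 c2)
        constructor
        · rw [StepS.out_inr_false S t c1 c2 hS, Set.ncard_singleton]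
        · rw [StepS.in_inr_false S t c1 c2 hS, Set.ncard_singleton]
      · have hS : S t c2 := by
          rcases hedge with ⟨p, hp⟩ | ⟨q, hq⟩
          · cases p with
            | inl a =>
              rcases hp.2 with ⟨hfalse, -⟩ | ⟨-, hS⟩
              · exact absurd hfalse (by simp)
              · exact hS
            | inr w => exact absurd hp (StepS.inr_inr S t c1 c2)
          · cases q with
            | inl b =>
              rcases hq with ⟨hfalse, -⟩ | ⟨-, -, hS⟩
              · exact absurd hfalse (by simp)
              · exact hS
            | inr w => exact absurd hq (StepS.inr_inr S t c1 c2)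
        constructor
        · rw [StepS.out_inr_true S t c1 c2 hS, Set.ncard_singleton]
        · rw [StepS.in_inr_true S t c1 c2 hS, Set.ncard_singleton]

/-- Every binary tree-child network on an `n`-taxon set is displayed in some binary tree-child
network on the same taxa with exactly `n - 1` reticulate nodes, all of whose tree components
contain exactly one leaf (hence are paths). -/
theorem stmt_15 {V X : Type} [Fintype V] [Fintype X] (N : Net V X)
    (hN : N.IsBinaryNet) (htc : N.TreeChild) :
    ∃ (V' : Type) (_ : Fintype V') (N' : Net V' X),
      N'.IsBinaryNet ∧ N'.TreeChild ∧
      {v : V' | N'.IsRet v}.ncard = Fintype.card X - 1 ∧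
      (∀ x : V', (x = N'.root ∨ N'.IsRet x) →
        {v ∈ N'.comp x | N'.IsLeaf v}.ncard = 1) ∧
      Display N N' := by
  suffices key : ∀ (k : ℕ) (W : Type) (_ : Fintype W) (M : Net W X),
      M.IsBinaryNet → M.TreeChild → Display N M →
      Fintype.card X - 1 - {v | M.IsRet v}.ncard ≤ k →
      ∃ (V' : Type) (_ : Fintype V') (N' : Net V' X),
        N'.IsBinaryNet ∧ N'.TreeChild ∧
        {v : V' | N'.IsRet v}.ncard = Fintype.card X - 1 ∧
        (∀ x : V', (x = N'.root ∨ N'.IsRet x) →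
          {v ∈ N'.comp x | N'.IsLeaf v}.ncard = 1) ∧
        Display N N' by
    exact key (Fintype.card X) V inferInstance N hN htc (display_refl N) (by omega)
  intro k
  induction k with
  | zero =>
    intro W _ M hb htcM hd hk
    by_cases hdet : ∀ v a b, M.TreeEdge v a → M.TreeEdge v b → a = b
    · refine ⟨W, inferInstance, M, hb, htcM, ?_, ?_, hd⟩
      · exact M.ret_ncard_eq hb.toIsPhylo htcM hdet
      · intro x _
        exact M.comp_leaf_ncard hb.acyclic htcM hdet x
    · exfalso
      push_neg at hdet
      obtain ⟨t, a, b, hta, htb, hab⟩ := hdet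
      have hb' := StepFacts.step_isBinary M t a b hb hta.1 htb.1 hab hta.2 htb.2
      have htc' := StepFacts.step_treeChild M t a b hb hta.1 htb.1 hab hta.2 htb.2 htcM
      have hcount := (stepNet M t a b).ret_ncard_le hb'.toIsPhylo htc'
      rw [StepFacts.step_ret_ncard M t a b hb hta.1 htb.1 hab hta.2 htb.2] at hcount
      have hXle := M.ret_ncard_le hb.toIsPhylo htcM
      omega
  | succ k ih =>
    intro W _ M hb htcM hd hk
    by_cases hdet : ∀ v a b, M.TreeEdge v a → M.TreeEdge v b → a = b
    · refine ⟨W, inferInstance, M, hb, htcM, ?_, ?_, hd⟩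
      · exact M.ret_ncard_eq hb.toIsPhylo htcM hdet
      · intro x _
        exact M.comp_leaf_ncard hb.acyclic htcM hdet x
    · push_neg at hdet
      obtain ⟨t, a, b, hta, htb, hab⟩ := hdet
      have hb' := StepFacts.step_isBinary M t a b hb hta.1 htb.1 hab hta.2 htb.2
      have htc' := StepFacts.step_treeChild M t a b hb hta.1 htb.1 hab hta.2 htb.2 htcM
      have hret := StepFacts.step_ret_ncard M t a b hb hta.1 htb.1 hab hta.2 htb.2
      refine ih (W ⊕ Bool) inferInstance (stepNet M t a b) hb' htc'
        (display_step M t a b hab N hd) ?_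
      rw [hret]
      omega
end

section
/- If a set 𝒯 of binary phylogenetic trees on an n-taxon set X is co-displayed in a binary tree-child network, then for every subset X' ⊆ X with |X'| ≥ 2, the number of distinct cherries occurring in trees of 𝒯 whose both taxa lie in X' is at most 2|X'|−3. -/
set_option linter.unusedSectionVars false
namespace TC16
open Relation

variable {V X : Type}

/-- Reticulation node. -/
def Ret (N : Net V X) (v : V) : Prop := 2 ≤ N.inDeg v

/-- A "legal" step downward: an edge whose source is a reticulation or has another,
reticulate child. -/
def LStep (N : Net V X) (u w : V) : Prop :=
  N.E u w ∧ (Ret N u ∨ ∃ d, N.E u d ∧ d ≠ w ∧ Ret N d)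

/-- Legal descent. -/
def Lg (N : Net V X) : V → V → Prop := Relation.ReflTransGen (LStep N)

/-- The structure extracted from a displayed cherry. -/
def Tripod (N : Net V X) (a b : X) : Prop :=
  ∃ v c1 c2, N.E v c1 ∧ N.E v c2 ∧ c1 ≠ c2 ∧ Lg N c1 (N.leaf a) ∧ Lg N c2 (N.leaf b)

section Basic

variable {V' X' : Type} [Finite V'] {M : Net V' X'}

lemma leaf_no_out {v w : V'} (h : M.IsLeaf v) (he : M.E v w) : False := by
  have hfin : {w | M.E v w}.Finite := Set.toFinite _
  have : {w | M.E v w} = ∅ := by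
    rw [← Set.ncard_eq_zero hfin]; exact h
  exact absurd he (by simp [Set.eq_empty_iff_forall_notMem] at this; exact this w)

lemma parent_eq {v u u' : V'} (h : M.inDeg v ≤ 1) (h1 : M.E u v) (h2 : M.E u' v) :
    u = u' := by
  have hfin : {u | M.E u v}.Finite := Set.toFinite _
  exact (Set.ncard_le_one hfin).1 h u h1 u' h2

lemma not_leaf_of_out {v w : V'} (he : M.E v w) : ¬ M.IsLeaf v :=
  fun h => leaf_no_out h he

lemma inDeg_pos {v u : V'} (h : M.E u v) : 1 ≤ M.inDeg v := by
  have hfin : {u | M.E u v}.Finite := Set.toFinite _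
  exact (Set.ncard_pos hfin).2 ⟨u, h⟩

end Basic

section BinNet

variable [Fintype V] {N : Net V X} (hN : N.IsBinaryNet)

include hN

lemma leaf_not_ret {v : V} (hl : N.IsLeaf v) : ¬ Ret N v := by
  obtain ⟨x, rfl⟩ := hN.leafSurj v hl
  intro hr
  have := hN.leafIn x
  simp only [Ret] at hr
  omega

lemma ret_out_one {v : V} (hr : Ret N v) : N.outDeg v = 1 := by
  have hnl : ¬ N.IsLeaf v := fun hl => leaf_not_ret hN hl hr
  rcases hN.deg v hnl with ⟨h1, _⟩ | ⟨_, h2⟩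
  · exact absurd hr (by simp only [Ret]; omega)
  · exact h2

lemma nonret_deg {v : V} (hnr : ¬ Ret N v) (hnl : ¬ N.IsLeaf v) :
    N.inDeg v ≤ 1 ∧ N.outDeg v = 2 := by
  rcases hN.deg v hnl with ⟨h1, h2⟩ | ⟨h1, _⟩
  · exact ⟨h1, h2⟩
  · exact absurd (by simp only [Ret]; omega) hnr

lemma children_pair {v c1 c2 : V} (h1 : N.E v c1) (h2 : N.E v c2) (hne : c1 ≠ c2) :
    {w | N.E v w} = {c1, c2} ∧ ¬ Ret N v := by
  have hnl : ¬ N.IsLeaf v := not_leaf_of_out h1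
  have hnr : ¬ Ret N v := by
    intro hr
    have ho := ret_out_one hN hr
    have hfin : {w | N.E v w}.Finite := Set.toFinite _
    exact hne ((Set.ncard_le_one hfin).1 ho.le c1 h1 c2 h2)
  have ho := (nonret_deg hN hnr hnl).2
  have hsub : ({c1, c2} : Set V) ⊆ {w | N.E v w} := by
    intro z hz; rcases hz with rfl | rfl
    · exact h1
    · exact h2
  have hcard : ({c1, c2} : Set V).ncard = 2 := by
    rw [Set.ncard_pair hne]
  have := Set.eq_of_subset_of_ncard_le hsub (by rw [hcard]; exact ho.le) (Set.toFinite _)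
  exact ⟨this.symm, hnr⟩

lemma other_child {v c : V} (h : N.E v c) (hnr : ¬ Ret N v) :
    ∃ d, N.E v d ∧ d ≠ c := by
  have hnl : ¬ N.IsLeaf v := not_leaf_of_out h
  have ho := (nonret_deg hN hnr hnl).2
  obtain ⟨a, b, hab, hset⟩ := Set.ncard_eq_two.1 ho
  have hc : c ∈ ({a, b} : Set V) := hset ▸ h
  have hmem : ∀ z ∈ ({a, b} : Set V), N.E v z := by
    intro z hz; have : z ∈ {w | N.E v w} := hset ▸ hz; exact this
  rcases hc with rfl | rfl
  · exact ⟨b, hmem b (by right; rfl), fun hbc => hab hbc.symm⟩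
  · exact ⟨a, hmem a (by left; rfl), hab⟩

end BinNet
end TC16
namespace TC16
open Relation
set_option linter.unusedSectionVars false

variable {V X : Type} [Fintype V] {N : Net V X}

/-- Well-foundedness downward: children are "smaller". -/
lemma wf_down (hac : N.Acyclic) : WellFounded (fun c v : V => N.E v c) := by
  have h1 : WellFounded (fun c v : V => Relation.TransGen N.E v c) := by
    refine @Finite.wellFounded_of_trans_of_irrefl V _ _ ⟨fun a b c hab hbc => ?_⟩ ⟨fun a ha => ?_⟩
    · exact Relation.TransGen.trans hbc hab
    · exact hac a ha
  exact Subrelation.wf (fun h => Relation.TransGen.single h) h1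

/-- Well-foundedness upward: parents are "smaller". -/
lemma wf_up (hac : N.Acyclic) : WellFounded (fun p v : V => N.E p v) := by
  have h1 : WellFounded (fun p v : V => Relation.TransGen N.E p v) := by
    refine @Finite.wellFounded_of_trans_of_irrefl V _ _ ⟨fun a b c hab hbc => ?_⟩ ⟨fun a ha => ?_⟩
    · exact Relation.TransGen.trans hab hbc
    · exact hac a ha
  exact Subrelation.wf (fun h => Relation.TransGen.single h) h1

section TC
variable (hN : N.IsBinaryNet) (htc : N.TreeChild)
include hN htc

/-- A reticulation has no legal parent. -/
lemma no_lparent_ret {w r : V} (hs : LStep N w r) (hr : Ret N r) : False := by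
  obtain ⟨hwr, hcase⟩ := hs
  have hnl : ¬ N.IsLeaf w := not_leaf_of_out hwr
  obtain ⟨c, hwc, hct⟩ := htc w hnl
  have hcnr : ¬ Ret N c := by simp only [Ret]; simp only [Net.IsTreeNode] at hct; omega
  rcases hcase with hw | ⟨d, hwd, hdr, hdret⟩
  · -- w reticulation: single child, which must be c, but c is a tree node ≠ r...
    have ho := ret_out_one hN hw
    have hcr : c = r := (Set.ncard_le_one (Set.toFinite _)).1 ho.le c hwc r hwr
    exact hcnr (hcr ▸ hr)
  · -- w has children r and d, both reticulations; c must be one of them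
    have hpair := (children_pair hN hwd hwr hdr).1
    have : c ∈ ({d, r} : Set V) := hpair ▸ hwc
    rcases this with rfl | rfl
    · exact hcnr hdret
    · exact hcnr hr

/-- Legal steps are deterministic. -/
lemma lstep_det {u w w' : V} (h1 : LStep N u w) (h2 : LStep N u w') : w = w' := by
  by_contra hne
  obtain ⟨he1, hc1⟩ := h1
  obtain ⟨he2, hc2⟩ := h2
  obtain ⟨hpair, hnr⟩ := children_pair hN he1 he2 hne
  -- u not a reticulation, so each step has a reticulate other child
  rcases hc1 with hu | ⟨d1, hd1, hd1w, hd1r⟩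
  · exact hnr hu
  rcases hc2 with hu | ⟨d2, hd2, hd2w, hd2r⟩
  · exact hnr hu
  -- d1 is a child ≠ w, so d1 = w'; similarly d2 = w; both children reticulate
  have hd1m : d1 = w ∨ d1 = w' := by
    have : d1 ∈ ({w, w'} : Set V) := hpair ▸ hd1
    simpa using this
  have hd2m : d2 = w ∨ d2 = w' := by
    have : d2 ∈ ({w, w'} : Set V) := hpair ▸ hd2
    simpa using this
  have hd1e : d1 = w' := hd1m.resolve_left hd1w
  have hd2e : d2 = w := hd2m.resolve_right hd2w
  have hnl : ¬ N.IsLeaf u := not_leaf_of_out he1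
  obtain ⟨c, huc, hct⟩ := htc u hnl
  have hcm : c = w ∨ c = w' := by
    have : c ∈ ({w, w'} : Set V) := hpair ▸ huc
    simpa using this
  have hcnr : ¬ Ret N c := by simp only [Ret]; simp only [Net.IsTreeNode] at hct; omega
  rcases hcm with rfl | rfl
  · exact hcnr (hd2e ▸ hd2r)
  · exact hcnr (hd1e ▸ hd1r)

/-- Legal descents from a common vertex to leaves are unique. -/
lemma lg_det {u z z' : V} (h1 : Lg N u z) (h2 : Lg N u z')
    (hz : N.IsLeaf z) (hz' : N.IsLeaf z') : z = z' := by
  induction u using (wf_down hN.acyclic).induction with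
  | _ u ih =>
  rcases h1.cases_head with rfl | ⟨w1, hs1, hr1⟩
  · rcases h2.cases_head with rfl | ⟨w2, hs2, _⟩
    · rfl
    · exact absurd hs2.1 (fun he => leaf_no_out hz he)
  · rcases h2.cases_head with rfl | ⟨w2, hs2, hr2⟩
    · exact absurd hs1.1 (fun he => leaf_no_out hz' he)
    · have hw : w1 = w2 := lstep_det hN htc hs1 hs2
      exact ih w1 hs1.1 hr1 (hw ▸ hr2)

/-- Merge: two legal ancestors of a common vertex are comparable. -/
lemma lg_merge {u u' z : V} (h1 : Lg N u z) (h2 : Lg N u' z) :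
    Lg N u u' ∨ Lg N u' u := by
  induction h2 using Relation.ReflTransGen.head_induction_on with
  | refl => exact Or.inl h1
  | @head u' w' hstep htail ih =>
    rcases ih with hl | hr
    · -- Lg u w', u' -> w' : either u = w' handled, else w' has unique legal parent
      rcases hl.cases_tail with rfl | ⟨y, huy, hyw⟩
      · exact Or.inr (Relation.ReflTransGen.single hstep)
      · -- two legal parents u' and y of w'
        have hw'nr : ¬ Ret N w' := fun hr => no_lparent_ret hN htc hstep hr
        have hdeg : N.inDeg w' ≤ 1 := by simp only [Ret] at hw'nr; omega
        have heq : u' = y := parent_eq hdeg hstep.1 hyw.1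
        exact Or.inl (by rw [heq]; exact huy)
    · exact Or.inr (Relation.ReflTransGen.head hstep hr)

/-- Top vertices: no legal parent. -/
def IsTop (N : Net V X) (t : V) : Prop := ∀ w, ¬ LStep N w t

omit hN htc in
lemma top_exists (hac : N.Acyclic) (u : V) : ∃ t, Lg N t u ∧ IsTop N t := by
  induction u using (wf_up hac).induction with
  | _ u ih =>
  by_cases h : ∃ w, LStep N w u
  · obtain ⟨w, hw⟩ := h
    obtain ⟨t, ht1, ht2⟩ := ih w hw.1
    exact ⟨t, ht1.tail hw, ht2⟩
  · exact ⟨u, Relation.ReflTransGen.refl, fun w hw => h ⟨w, hw⟩⟩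

lemma top_unique {t t' z : V} (h1 : Lg N t z) (h2 : Lg N t' z)
    (ht : IsTop N t) (ht' : IsTop N t') : t = t' := by
  rcases lg_merge hN htc h1 h2 with h | h
  · rcases h.cases_tail with rfl | ⟨y, _, hy⟩
    · rfl
    · exact absurd hy (ht' y)
  · rcases h.cases_tail with rfl | ⟨y, _, hy⟩
    · rfl
    · exact absurd hy (ht y)

/-- Everything legally above `u` is below the top. -/
lemma top_above {t u z : V} (htz : Lg N t z) (ht : IsTop N t) (huz : Lg N u z) :
    Lg N t u := by
  rcases lg_merge hN htc htz huz with h | h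
  · exact h
  · rcases h.cases_tail with rfl | ⟨y, _, hy⟩
    · exact Relation.ReflTransGen.refl
    · exact absurd hy (ht y)

end TC

/-- Height: number of strict ancestors; strictly increasing along edges. -/
noncomputable def ht (N : Net V X) : V → ℕ := fun v => {u | Relation.TransGen N.E u v}.ncard

lemma ht_lt (hac : N.Acyclic) {u v : V} (h : N.E u v) : ht N u < ht N v := by
  have hsub : {w | Relation.TransGen N.E w u} ⊂ {w | Relation.TransGen N.E w v} := by
    constructor
    · intro w hw
      exact Relation.TransGen.tail hw h
    · intro hcon
      have : Relation.TransGen N.E u u := hcon (Relation.TransGen.single h)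
      exact hac u this
  exact Set.ncard_lt_ncard hsub (Set.toFinite _)

lemma ht_le_of_lg (hac : N.Acyclic) {u w : V} (h : Lg N u w) :
    ht N u ≤ ht N w := by
  induction h with
  | refl => exact le_refl _
  | tail _ hstep ih => exact ih.trans (ht_lt hac hstep.1).le

end TC16
namespace TC16
open Relation
set_option linter.unusedSectionVars false
attribute [local instance] Classical.propDecidable

variable {V X : Type} [Fintype V] {N : Net V X}

/-- Canonical top of a leaf's legal chain. -/
noncomputable def topx (N : Net V X) [Fintype V] (hac : N.Acyclic) (x : X) : V :=
  (top_exists hac (N.leaf x)).choose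

lemma topx_lg (hac : N.Acyclic) (x : X) : Lg N (topx N hac x) (N.leaf x) :=
  (top_exists hac (N.leaf x)).choose_spec.1

lemma topx_top (hac : N.Acyclic) (x : X) : IsTop N (topx N hac x) :=
  (top_exists hac (N.leaf x)).choose_spec.2

/-- Canonical leaf below a vertex via legal descent. -/
noncomputable def lch (N : Net V X) (u : V) (dflt : X) : X :=
  if h : ∃ x, Lg N u (N.leaf x) then h.choose else dflt

lemma lch_eq (hN : N.IsBinaryNet) (htc : N.TreeChild) {u : V} {a : X} (dflt : X)
    (h : Lg N u (N.leaf a)) : lch N u dflt = a := by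
  rw [lch, dif_pos ⟨a, h⟩]
  have h0 : Lg N u (N.leaf (⟨a, h⟩ : ∃ x, Lg N u (N.leaf x)).choose) :=
    (⟨a, h⟩ : ∃ x, Lg N u (N.leaf x)).choose_spec
  have := lg_det hN htc h0 h (hN.leafIsLeaf _) (hN.leafIsLeaf _)
  exact hN.leafInj this

/-- The at most two canonical partner taxa of a taxon. -/
noncomputable def fg (N : Net V X) [Fintype V] (hac : N.Acyclic) (x : X) : X × X :=
  if hr : ∃ p q : V, p ≠ q ∧ {u | N.E u (topx N hac x)} = {p, q} then
    (lch N hr.choose x, lch N hr.choose_spec.choose x)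
  else if hp : ∃ a, ∃ v s : V, N.E v (topx N hac x) ∧ N.E v s ∧ s ≠ topx N hac x ∧
      Lg N s (N.leaf a) then
    (hp.choose, hp.choose)
  else (x, x)

/-- Key classification: for a tripod pair, if `a`'s top is no higher than `b`'s,
then `a` is one of the two canonical partners of `b`. -/
lemma main_edge (hN : N.IsBinaryNet) (htc : N.TreeChild) {a b : X}
    (h : Tripod N a b)
    (hle : ht N (topx N hN.acyclic a) ≤ ht N (topx N hN.acyclic b)) :
    a = (fg N hN.acyclic b).1 ∨ a = (fg N hN.acyclic b).2 := by
  classical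
  set hac := hN.acyclic with hhac
  obtain ⟨v, c1, c2, h1, h2, hne, lga, lgb⟩ := h
  obtain ⟨hpair, hvnr⟩ := children_pair hN h1 h2 hne
  by_cases hr2 : Ret N c2
  · -- `b`'s top is the reticulation c2; its two parents give the partners
    have htop2 : IsTop N c2 := fun w hw => absurd hr2 (fun hr => no_lparent_ret hN htc hw hr)
    have hb : topx N hac b = c2 :=
      top_unique hN htc (topx_lg hac b) lgb (topx_top hac b) htop2
    have hvc1 : LStep N v c1 := ⟨h1, Or.inr ⟨c2, h2, fun hc => hne hc.symm, hr2⟩⟩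
    have hlgva : Lg N v (N.leaf a) := Relation.ReflTransGen.head hvc1 lga
    have hnl2 : ¬ N.IsLeaf c2 := fun hl => leaf_not_ret hN hl hr2
    have hdeg2 : N.inDeg c2 = 2 := by
      rcases hN.deg c2 hnl2 with ⟨hle1, _⟩ | ⟨heq, _⟩
      · exact absurd hr2 (by simp only [Ret]; omega)
      · exact heq
    have hcond : ∃ p q : V, p ≠ q ∧ {u | N.E u (topx N hac b)} = {p, q} := by
      rw [hb]; exact Set.ncard_eq_two.1 hdeg2
    rw [fg, dif_pos hcond]
    have hpq := hcond.choose_spec.choose_spec.2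
    have hvm : v ∈ {u | N.E u (topx N hac b)} := by rw [hb]; exact h2
    rw [hpq] at hvm
    rcases hvm with hv | hv
    · left
      show a = lch N hcond.choose b
      rw [← hv]
      exact (lch_eq hN htc b hlgva).symm
    · right
      show a = lch N hcond.choose_spec.choose b
      rw [← hv]
      exact (lch_eq hN htc b hlgva).symm
  · by_cases hr1 : Ret N c1
    · -- impossible: `b`'s top would be strictly lower than `a`'s
      exfalso
      have htop1 : IsTop N c1 := fun w hw => absurd hr1 (fun hr => no_lparent_ret hN htc hw hr)
      have ha : topx N hac a = c1 :=
        top_unique hN htc (topx_lg hac a) lga (topx_top hac a) htop1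
      have hvc2 : LStep N v c2 := ⟨h2, Or.inr ⟨c1, h1, hne, hr1⟩⟩
      have hlgvb : Lg N v (N.leaf b) := Relation.ReflTransGen.head hvc2 lgb
      have habove : Lg N (topx N hac b) v :=
        top_above hN htc (topx_lg hac b) (topx_top hac b) hlgvb
      have hlt : ht N (topx N hac b) < ht N (topx N hac a) := by
        calc ht N (topx N hac b) ≤ ht N v := ht_le_of_lg hac habove
          _ < ht N c1 := ht_lt hac h1
          _ = ht N (topx N hac a) := by rw [ha]
      omega
    · -- neither child reticulate: `c2` is b's top, and its sibling determines a
      have hdeg2 : N.inDeg c2 ≤ 1 := by simp only [Ret] at hr2; omega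
      have htop2 : IsTop N c2 := by
        intro w hw
        have hwv : w = v := parent_eq hdeg2 hw.1 h2
        rcases hw.2 with hrw | ⟨d, hd, hdne, hdr⟩
        · rw [hwv] at hrw; exact hvnr hrw
        · rw [hwv] at hd
          have hdm : d = c1 ∨ d = c2 := by
            have : d ∈ ({c1, c2} : Set V) := hpair ▸ hd
            simpa using this
          rcases hdm with rfl | rfl
          · exact hr1 hdr
          · exact hr2 hdr
      have hb : topx N hac b = c2 :=
        top_unique hN htc (topx_lg hac b) lgb (topx_top hac b) htop2
      have hnot : ¬ ∃ p q : V, p ≠ q ∧ {u | N.E u (topx N hac b)} = {p, q} := by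
        rintro ⟨p, q, hpq, hset⟩
        rw [hb] at hset
        have : N.inDeg c2 = 2 := by
          show {u | N.E u c2}.ncard = 2
          rw [hset, Set.ncard_pair hpq]
        omega
      have hcond : ∃ a', ∃ v' s' : V, N.E v' (topx N hac b) ∧ N.E v' s' ∧ s' ≠ topx N hac b ∧
          Lg N s' (N.leaf a') := ⟨a, v, c1, by rw [hb]; exact h2, h1, by rw [hb]; exact hne, lga⟩
      rw [fg, dif_neg hnot, dif_pos hcond]
      obtain ⟨v', s', he1', he2', hne', hlg'⟩ := hcond.choose_spec
      have hv' : v' = v := by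
        rw [hb] at he1'
        exact parent_eq hdeg2 he1' h2
      rw [hv'] at he2'
      have hsm : s' = c1 ∨ s' = c2 := by
        have : s' ∈ ({c1, c2} : Set V) := hpair ▸ he2'
        simpa using this
      have hs' : s' = c1 := by
        rcases hsm with h' | h'
        · exact h'
        · rw [hb] at hne'; exact absurd h' hne'
      rw [hs'] at hlg'
      have : N.leaf hcond.choose = N.leaf a :=
        lg_det hN htc hlg' lga (hN.leafIsLeaf _) (hN.leafIsLeaf _)
      left
      exact (hN.leafInj this).symm

/-- Tripods are symmetric. -/
lemma tripod_symm {a b : X} (h : Tripod N a b) : Tripod N b a := by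
  obtain ⟨v, c1, c2, h1, h2, hne, lga, lgb⟩ := h
  exact ⟨v, c2, c1, h2, h1, hne.symm, lgb, lga⟩

end TC16
namespace TC16
open Relation
set_option linter.unusedSectionVars false

/-- Abstract counting: if every edge's smaller endpoint (in an injective key order)
is one of two canonical partners of the larger endpoint, the edge set is
hereditarily of size at most `2k - 3`. -/
lemma count_lemma {X : Type} [Fintype X] (E : Set (Sym2 X)) (K : X → ℕ ×ₗ ℕ)
    (hK : Function.Injective K) (f g : X → X)
    (hE : ∀ p ∈ E, ¬ p.IsDiag)
    (hfg : ∀ a b : X, s(a, b) ∈ E → K a < K b → a = f b ∨ a = g b) :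
    ∀ (n : ℕ) (X' : Finset X), X'.card = n → 2 ≤ n →
      {p | p ∈ E ∧ ∀ x ∈ p, x ∈ X'}.ncard ≤ 2 * n - 3 := by
  classical
  intro n
  induction n using Nat.strong_induction_on with
  | _ n ih =>
  intro X' hcard hn
  rcases Nat.lt_or_ge n 4 with hlt | hge
  · -- base cases n = 2, n = 3
    interval_cases n
    · -- n = 2
      obtain ⟨a, b, hab, rfl⟩ := Finset.card_eq_two.1 hcard
      have hsub : {p | p ∈ E ∧ ∀ x ∈ p, x ∈ ({a, b} : Finset X)} ⊆ {s(a, b)} := by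
        rintro p ⟨hpE, hmem⟩
        induction p using Sym2.ind with
        | _ c d =>
        have hcd : c ≠ d := by
          intro hcd; exact hE _ hpE (by simp [hcd])
        have hc : c = a ∨ c = b := by simpa using hmem c (Sym2.mem_mk_left c d)
        have hd : d = a ∨ d = b := by simpa using hmem d (Sym2.mem_mk_right c d)
        simp only [Set.mem_singleton_iff]
        rcases hc with rfl | rfl <;> rcases hd with rfl | rfl
        · exact absurd rfl hcd
        · rfl
        · exact Sym2.eq_swap
        · exact absurd rfl hcd
      calc {p | p ∈ E ∧ ∀ x ∈ p, x ∈ ({a, b} : Finset X)}.ncard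
          ≤ ({s(a, b)} : Set (Sym2 X)).ncard := Set.ncard_le_ncard hsub (Set.toFinite _)
        _ = 1 := Set.ncard_singleton _
        _ ≤ 2 * 2 - 3 := by norm_num
    · -- n = 3
      obtain ⟨a, b, c, hab, hac, hbc, rfl⟩ := Finset.card_eq_three.1 hcard
      have hsub : {p | p ∈ E ∧ ∀ x ∈ p, x ∈ ({a, b, c} : Finset X)} ⊆
          {s(a, b), s(a, c), s(b, c)} := by
        rintro p ⟨hpE, hmem⟩
        induction p using Sym2.ind with
        | _ u v =>
        have huv : u ≠ v := by
          intro h; exact hE _ hpE (by simp [h])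
        have hu : u = a ∨ u = b ∨ u = c := by simpa using hmem u (Sym2.mem_mk_left u v)
        have hv : v = a ∨ v = b ∨ v = c := by simpa using hmem v (Sym2.mem_mk_right u v)
        simp only [Set.mem_insert_iff, Set.mem_singleton_iff]
        rcases hu with rfl | rfl | rfl <;> rcases hv with rfl | rfl | rfl
        · exact absurd rfl huv
        · exact Or.inl rfl
        · exact Or.inr (Or.inl rfl)
        · exact Or.inl Sym2.eq_swap
        · exact absurd rfl huv
        · exact Or.inr (Or.inr rfl)
        · exact Or.inr (Or.inl Sym2.eq_swap)
        · exact Or.inr (Or.inr Sym2.eq_swap)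
        · exact absurd rfl huv
      calc {p | p ∈ E ∧ ∀ x ∈ p, x ∈ ({a, b, c} : Finset X)}.ncard
          ≤ ({s(a, b), s(a, c), s(b, c)} : Set (Sym2 X)).ncard :=
            Set.ncard_le_ncard hsub (Set.toFinite _)
        _ ≤ 3 := by
            refine le_trans (Set.ncard_insert_le _ _) ?_
            have := Set.ncard_insert_le s(a, c) ({s(b, c)} : Set (Sym2 X))
            simp only [Set.ncard_singleton] at this ⊢
            omega
        _ ≤ 2 * 3 - 3 := by norm_num
  · -- inductive step, n ≥ 4
    have hne : X'.Nonempty := Finset.card_pos.1 (by omega)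
    obtain ⟨bm, hbm, hmax⟩ := X'.exists_max_image K hne
    set A : Set (Sym2 X) := {p | p ∈ E ∧ ∀ x ∈ p, x ∈ X'.erase bm} with hA
    set B : Set (Sym2 X) := {s(f bm, bm), s(g bm, bm)} with hB
    have hsub : {p | p ∈ E ∧ ∀ x ∈ p, x ∈ X'} ⊆ A ∪ B := by
      rintro p ⟨hpE, hmem⟩
      by_cases hbp : bm ∈ p
      · right
        induction p using Sym2.ind with
        | _ u v =>
        have huv : u ≠ v := by
          intro h; exact hE _ hpE (by simp [h])
        have key : ∀ w : X, s(w, bm) ∈ E → w ∈ X' → w ≠ bm →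
            s(w, bm) ∈ B := by
          intro w hwE hwX hwbm
          have hKlt : K w < K bm :=
            lt_of_le_of_ne (hmax w hwX) (fun h => hwbm (hK h))
          rcases hfg w bm hwE hKlt with h | h
          · rw [hB]; left; rw [h]
          · rw [hB]; right; rw [h]; exact rfl
        rcases Sym2.mem_iff.1 hbp with rfl | rfl
        · -- bm = u
          have h1 : s(v, bm) ∈ E := by rw [Sym2.eq_swap]; exact hpE
          have h2 := key v h1 (hmem v (Sym2.mem_mk_right bm v)) (fun h => huv h.symm)
          rw [Sym2.eq_swap]; exact h2
        · -- bm = v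
          exact key u hpE (hmem u (Sym2.mem_mk_left u bm)) huv
      · left
        refine ⟨hpE, fun x hx => Finset.mem_erase.2 ⟨fun hxb => hbp (hxb ▸ hx), hmem x hx⟩⟩
    have hcardA : A.ncard ≤ 2 * (n - 1) - 3 := by
      refine ih (n - 1) (by omega) (X'.erase bm) ?_ (by omega)
      rw [Finset.card_erase_of_mem hbm, hcard]
    have hcardB : B.ncard ≤ 2 := by
      refine le_trans (Set.ncard_insert_le _ _) ?_
      simp [Set.ncard_singleton]
    calc {p | p ∈ E ∧ ∀ x ∈ p, x ∈ X'}.ncard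
        ≤ (A ∪ B).ncard := Set.ncard_le_ncard hsub (Set.toFinite _)
      _ ≤ A.ncard + B.ncard := Set.ncard_union_le _ _
      _ ≤ 2 * (n - 1) - 3 + 2 := by omega
      _ ≤ 2 * n - 3 := by omega

end TC16
namespace TC16
open Relation
set_option linter.unusedSectionVars false

variable {V X : Type} [Fintype V] {N : Net V X}

/-- Every vertex has a tree path down to a leaf (tree-child property). -/
lemma desc (hN : N.IsBinaryNet) (htc : N.TreeChild) (d : V) :
    ∃ xl : X, Relation.ReflTransGen (fun u w => N.E u w ∧ N.inDeg w ≤ 1) d (N.leaf xl) := by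
  induction d using (wf_down hN.acyclic).induction with
  | _ d ih =>
  by_cases hl : N.IsLeaf d
  · obtain ⟨x, hx⟩ := hN.leafSurj d hl
    exact ⟨x, by rw [hx]⟩
  · obtain ⟨w, hw, hwt⟩ := htc d hl
    obtain ⟨xl, hxl⟩ := ih w hw
    exact ⟨xl, Relation.ReflTransGen.head ⟨hw, hwt⟩ hxl⟩

/-- Any `S`-path to a leaf dominated by `d` either enters `d` through `S`,
or starts below `d`. -/
lemma pass {S : V → V → Prop} (hSE : ∀ u v, S u v → N.E u v) {d l : V}
    (hch : Relation.ReflTransGen (fun u w => N.E u w ∧ N.inDeg w ≤ 1) d l) :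
    ∀ z, Relation.ReflTransGen S z l → (∃ u, S u d) ∨ Relation.ReflTransGen N.E d z := by
  induction hch with
  | refl =>
    intro z hz
    rcases hz.cases_tail with h | ⟨c, _, hcd⟩
    · right; rw [h]
    · left; exact ⟨c, hcd⟩
  | @tail m l' hdm hstep ih =>
    intro z hz
    rcases hz.cases_tail with h | ⟨c, hzc, hcl⟩
    · right
      rw [← h]
      exact Relation.ReflTransGen.mono (p := N.E) (by intro u w hw; exact hw.1) _ _ (hdm.tail hstep)
    · have hcm : c = m := parent_eq hstep.2 (hSE _ _ hcl) hstep.1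
      exact ih z (hcm ▸ hzc)

/-- Two restricted `S`-paths from a common start to distinct leaves must diverge
immediately; they cannot start at the same first vertex. -/
lemma div {S : V → V → Prop} {A : Set V} (hSE : ∀ u v, S u v → N.E u v)
    (hsupp : ∀ v : V, v ∉ A → ((∃ u, S u v) ∨ (∃ w, S v w)) →
      {w | S v w}.ncard = 1 ∧ {u | S u v}.ncard = 1)
    {z1 z2 : V} (hz1 : N.IsLeaf z1) (hz2 : N.IsLeaf z2) (hne : z1 ≠ z2) (hz2A : z2 ∈ A) :
    ∀ c, Relation.ReflTransGen (fun u w => S u w ∧ (w = z1 ∨ w ∉ A)) c z1 →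
      (c = z1 ∨ c ∉ A) →
      Relation.ReflTransGen (fun u w => S u w ∧ (w = z2 ∨ w ∉ A)) c z2 → False := by
  intro c h1
  induction h1 using Relation.ReflTransGen.head_induction_on with
  | refl =>
    intro _ h2
    rcases h2.cases_head with h | ⟨w, hstep, _⟩
    · exact hne h
    · exact leaf_no_out hz1 (hSE _ _ hstep.1)
  | @head c w hstep htail ih =>
    intro hc h2
    have hcA : c ∉ A := by
      rcases hc with rfl | h
      · exact absurd (hSE _ _ hstep.1) (fun he => leaf_no_out hz1 he)
      · exact h
    rcases h2.cases_head with h | ⟨w2, hstep2, htail2⟩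
    · rw [h] at hcA; exact hcA hz2A
    · have hout := (hsupp c hcA (Or.inr ⟨w, hstep.1⟩)).1
      have hww : w = w2 :=
        (Set.ncard_le_one (Set.toFinite _)).1 hout.le w hstep.1 w2 hstep2.1
      exact ih hstep.2 (hww ▸ htail2)

/-- Lifting a restricted `S`-path to a legal descent. -/
lemma lift (hN : N.IsBinaryNet) (htc : N.TreeChild) {S : V → V → Prop} {A : Set V}
    (hSE : ∀ u v, S u v → N.E u v)
    (hsupp : ∀ v : V, v ∉ A → ((∃ u, S u v) ∨ (∃ w, S v w)) →
      {w | S v w}.ncard = 1 ∧ {u | S u v}.ncard = 1)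
    {ρ : V} (hreach : ∀ x : X, Relation.ReflTransGen S ρ (N.leaf x))
    {z1 : V} (hz1 : N.IsLeaf z1) :
    ∀ w, Relation.ReflTransGen (fun u w' => S u w' ∧ (w' = z1 ∨ w' ∉ A)) w z1 →
      (w = z1 ∨ w ∉ A) → Relation.ReflTransGen N.E ρ w → Lg N w z1 := by
  intro w h1
  induction h1 using Relation.ReflTransGen.head_induction_on with
  | refl => intro _ _; exact Relation.ReflTransGen.refl
  | @head w c hstep htail ih =>
    intro hw hρ
    have hwA : w ∉ A := by
      rcases hw with rfl | h
      · exact absurd (hSE _ _ hstep.1) (fun he => leaf_no_out hz1 he)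
      · exact h
    have hE : N.E w c := hSE _ _ hstep.1
    have hLg : Lg N c z1 := ih hstep.2 (hρ.tail hE)
    refine Relation.ReflTransGen.head ⟨hE, ?_⟩ hLg
    by_cases hret : Ret N w
    · exact Or.inl hret
    · right
      obtain ⟨d, hd, hdc⟩ := other_child hN hE hret
      refine ⟨d, hd, hdc, ?_⟩
      by_contra hdret
      have hdle : N.inDeg d ≤ 1 := by simp only [Ret] at hdret; omega
      obtain ⟨xl, hxl⟩ := desc hN htc d
      rcases pass hSE hxl ρ (hreach xl) with ⟨u, hSud⟩ | hdz
      · have huw : u = w := parent_eq hdle (hSE _ _ hSud) hd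
        have hout := (hsupp w hwA (Or.inr ⟨c, hstep.1⟩)).1
        have : d = c :=
          (Set.ncard_le_one (Set.toFinite _)).1 hout.le d (huw ▸ hSud) c hstep.1
        exact hdc this
      · exact hN.acyclic w (Relation.TransGen.head' hd (hdz.trans hρ))

/-- Images of tree paths are `S`-paths. -/
lemma trans_path {VT : Type} {T : Net VT X} {S : V → V → Prop} {φ : VT → V}
    (hpath : ∀ a b, T.E a b → pathAvoid S (Set.range φ) (φ a) (φ b))
    {s t : VT} (h : Relation.ReflTransGen T.E s t) :
    Relation.ReflTransGen S (φ s) (φ t) := by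
  induction h with
  | refl => exact Relation.ReflTransGen.refl
  | tail _ hstep ih =>
    exact ih.trans (Relation.ReflTransGen.mono (p := S) (by intro u v h; exact h.1) _ _ (hpath _ _ hstep))

/-- The main extraction: a cherry of a displayed tree yields a tripod in `N`. -/
lemma display_tripod {VT : Type} [Finite VT] {T : Net VT X}
    (hN : N.IsBinaryNet) (htc : N.TreeChild) (hT : T.IsBinaryTree) (hD : Display T N)
    {x y : X} (hc : T.HasCherry x y) : Tripod N x y := by
  obtain ⟨hxy, p, hpx, hpy⟩ := hc
  obtain ⟨S, φ, hSE, hinj, hleafφ, hpath, hdeg, hsupp⟩ := hD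
  have hreach : ∀ z : X, Relation.ReflTransGen S (φ T.root) (N.leaf z) := by
    intro z
    have := trans_path hpath (hT.1.reach (T.leaf z))
    rwa [hleafφ] at this
  have hpx' := hpath p (T.leaf x) hpx
  have hpy' := hpath p (T.leaf y) hpy
  rw [pathAvoid, hleafφ x] at hpx'
  rw [pathAvoid, hleafφ y] at hpy'
  have hne_px : φ p ≠ N.leaf x := by
    intro h
    rw [← hleafφ x] at h
    exact leaf_no_out (hT.1.leafIsLeaf x) ((hinj h) ▸ hpx)
  have hne_py : φ p ≠ N.leaf y := by
    intro h
    rw [← hleafφ y] at h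
    exact leaf_no_out (hT.1.leafIsLeaf y) ((hinj h) ▸ hpy)
  rcases hpx'.cases_head with h | ⟨c1, hs1, hr1⟩
  · exact absurd h hne_px
  rcases hpy'.cases_head with h | ⟨c2, hs2, hr2⟩
  · exact absurd h hne_py
  have hzx : N.IsLeaf (N.leaf x) := hN.leafIsLeaf x
  have hzy : N.IsLeaf (N.leaf y) := hN.leafIsLeaf y
  have hnexy : N.leaf x ≠ N.leaf y := fun h => hxy (hN.leafInj h)
  have hc12 : c1 ≠ c2 := by
    rintro rfl
    exact div hSE hsupp hzx hzy hnexy ⟨T.leaf y, hleafφ y⟩ c1 hr1 hs1.2 hr2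
  have hρp : Relation.ReflTransGen N.E (φ T.root) (φ p) :=
    Relation.ReflTransGen.mono (p := N.E) (by intro u v h; exact hSE u v h) _ _ (trans_path hpath (hT.1.reach p))
  exact ⟨φ p, c1, c2, hSE _ _ hs1.1, hSE _ _ hs2.1, hc12,
    lift hN htc hSE hsupp hreach hzx c1 hr1 hs1.2 (hρp.tail (hSE _ _ hs1.1)),
    lift hN htc hSE hsupp hreach hzy c2 hr2 hs2.2 (hρp.tail (hSE _ _ hs2.1))⟩

end TC16
/-- If a set of binary trees on a taxon set `X` is co-displayed in a binary tree-child network,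
then for every subset `X' ⊆ X` with `|X'| ≥ 2`, the number of distinct cherries of the trees
with both taxa in `X'` is at most `2|X'| - 3`. -/
theorem stmt_16 {V X : Type} [Fintype V] [Fintype X] (N : Net V X)
    (hN : N.IsBinaryNet) (htc : N.TreeChild)
    (ι : Type) (VT : ι → Type) (Ts : ∀ i, Net (VT i) X)
    (hfin : ∀ i, Finite (VT i)) (htree : ∀ i, (Ts i).IsBinaryTree)
    (hdisp : ∀ i, Display (Ts i) N) :
    ∀ X' : Finset X, 2 ≤ X'.card →
      {p : Sym2 X | (∃ i, p ∈ Net.cherries (Ts i)) ∧ ∀ x ∈ p, x ∈ X'}.ncard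
        ≤ 2 * X'.card - 3 := by
  classical
  intro X' hX'
  have hac : N.Acyclic := hN.acyclic
  set E0 : Set (Sym2 X) := {p | ∃ a b : X, p = s(a, b) ∧ a ≠ b ∧ TC16.Tripod N a b} with hE0
  have hsub : {p : Sym2 X | (∃ i, p ∈ Net.cherries (Ts i)) ∧ ∀ x ∈ p, x ∈ X'} ⊆
      {p | p ∈ E0 ∧ ∀ x ∈ p, x ∈ X'} := by
    rintro p ⟨⟨i, hp⟩, hmem⟩
    obtain ⟨a, b, rfl, hcherry⟩ := hp
    have : Finite (VT i) := hfin i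
    exact ⟨⟨a, b, rfl, hcherry.1,
      TC16.display_tripod hN htc (htree i) (hdisp i) hcherry⟩, hmem⟩
  set K : X → ℕ ×ₗ ℕ :=
    fun a => toLex (TC16.ht N (TC16.topx N hN.acyclic a), ((Fintype.equivFin X) a : ℕ))
    with hKdef
  have hK : Function.Injective K := by
    intro a b h
    have h2 : ((Fintype.equivFin X) a : ℕ) = ((Fintype.equivFin X) b : ℕ) := by
      have := congrArg (fun z : ℕ ×ₗ ℕ => (ofLex z).2) h
      simpa [hKdef] using this
    exact (Fintype.equivFin X).injective (Fin.val_injective h2)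
  have hE : ∀ p ∈ E0, ¬ p.IsDiag := by
    rintro p ⟨a, b, rfl, hab, _⟩
    simpa [Sym2.mk_isDiag_iff] using hab
  have hfg : ∀ a b : X, s(a, b) ∈ E0 → K a < K b →
      a = (TC16.fg N hN.acyclic b).1 ∨ a = (TC16.fg N hN.acyclic b).2 := by
    rintro a b ⟨a', b', heq, hab', htrip⟩ hKlt
    have hle : TC16.ht N (TC16.topx N hN.acyclic a) ≤ TC16.ht N (TC16.topx N hN.acyclic b) := by
      simp only [hKdef] at hKlt
      rcases Prod.Lex.lt_iff.1 hKlt with h | ⟨h, _⟩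
      · exact le_of_lt h
      · exact le_of_eq h
    rcases Sym2.eq_iff.1 heq with ⟨ha, hb⟩ | ⟨ha, hb⟩
    · exact TC16.main_edge hN htc (ha ▸ hb ▸ htrip) hle
    · exact TC16.main_edge hN htc (TC16.tripod_symm (hb ▸ ha ▸ htrip)) hle
  have hcount := TC16.count_lemma E0 K hK _ _ hE hfg X'.card X' rfl hX'
  calc {p : Sym2 X | (∃ i, p ∈ Net.cherries (Ts i)) ∧ ∀ x ∈ p, x ∈ X'}.ncard
      ≤ {p | p ∈ E0 ∧ ∀ x ∈ p, x ∈ X'}.ncard := Set.ncard_le_ncard hsub (Set.toFinite _)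
    _ ≤ 2 * X'.card - 3 := hcount
end
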